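/- arXiv:2303.10520 — 7 statements merged into one kernel-verified Lean document; each statement's English description precedes it below -/
import Mathlib

section
/- Let X, Y, Z be locally convex Hausdorff topological vector spaces and F : X ⇒ Y a multifunction whose graph is {(x,y) : A₁(x) + A₂(y) = z, ⟨x_i*, x⟩ + ⟨y_i*, y⟩ ≤ β_i, i = 1,…,m}, where A₁ : X → Z and A₂ : Y → Z are continuous linear maps, z ∈ Z, x_i* ∈ X*, y_i* ∈ Y*, β_i ∈ ℝ. If A₂ maps every finite-codimensional closed linear subspace of Y to a closed subset of Z, then dom F = {x : F(x) ≠ ∅} is a generalized polyhedral convex set in X. -/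
/-- A set is generalized polyhedral convex if it is the intersection of a closed
affine subspace with finitely many half-spaces given by continuous linear functionals. -/
def IsGPC {E : Type*} [AddCommGroup E] [Module ℝ E] [TopologicalSpace E]
    (D : Set E) : Prop :=
  ∃ (n : ℕ) (f : Fin n → E →L[ℝ] ℝ) (α : Fin n → ℝ) (L : AffineSubspace ℝ E),
    IsClosed (L : Set E) ∧ D = {x | x ∈ L ∧ ∀ i, f i x ≤ α i}

/-! ### Algebraic polyhedra and Fourier–Motzkin elimination -/

section Poly

variable {E F : Type*} [AddCommGroup E] [Module ℝ E] [AddCommGroup F] [Module ℝ F]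

/-- A set is (algebraically) polyhedral if it is a finite intersection of half-spaces
given by linear functionals. -/
def PolySet (s : Set E) : Prop :=
  ∃ (n : ℕ) (f : Fin n → E →ₗ[ℝ] ℝ) (b : Fin n → ℝ), s = {x | ∀ i, f i x ≤ b i}

lemma polySet_of_fintype {ι : Type} [Fintype ι] (f : ι → E →ₗ[ℝ] ℝ) (b : ι → ℝ) :
    PolySet {x | ∀ i, f i x ≤ b i} := by
  classical
  let e := Fintype.equivFin ι
  refine ⟨Fintype.card ι, fun k => f (e.symm k), fun k => b (e.symm k), ?_⟩
  ext x
  constructor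
  · intro h k
    exact h _
  · intro h i
    simpa using h (e i)

lemma PolySet.preimage (L : F →ₗ[ℝ] E) {s : Set E} (h : PolySet s) : PolySet (⇑L ⁻¹' s) := by
  obtain ⟨n, f, b, rfl⟩ := h
  exact ⟨n, fun i => (f i).comp L, b, rfl⟩

lemma PolySet.image_equiv (e : E ≃ₗ[ℝ] F) {s : Set E} (h : PolySet s) : PolySet (⇑e '' s) := by
  have heq : ⇑e '' s = ⇑(e.symm.toLinearMap) ⁻¹' s := by
    ext y
    constructor
    · rintro ⟨x, hx, rfl⟩
      simpa using hx
    · intro hy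
      exact ⟨e.symm y, hy, e.apply_symm_apply y⟩
  rw [heq]
  exact h.preimage _

lemma PolySet.inter {s t : Set E} (hs : PolySet s) (ht : PolySet t) : PolySet (s ∩ t) := by
  obtain ⟨n, f, b, rfl⟩ := hs
  obtain ⟨n', f', b', rfl⟩ := ht
  have : ({x | ∀ i, f i x ≤ b i} ∩ {x | ∀ i, f' i x ≤ b' i} : Set E)
      = {x | ∀ i : Fin n ⊕ Fin n', Sum.elim f f' i x ≤ Sum.elim b b' i} := by
    ext x
    simp only [Set.mem_inter_iff, Set.mem_setOf_eq, Sum.forall, Sum.elim_inl, Sum.elim_inr]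
  rw [this]
  exact polySet_of_fintype _ _

lemma polySet_eq {ι : Type} [Fintype ι] (f : ι → E →ₗ[ℝ] ℝ) (c : ι → ℝ) :
    PolySet {x | ∀ i, f i x = c i} := by
  have : {x | ∀ i, f i x = c i}
      = {x | ∀ i : ι ⊕ ι, Sum.elim f (fun j => -(f j)) i x ≤ Sum.elim c (fun j => -(c j)) i} := by
    ext x
    simp only [Set.mem_setOf_eq, Sum.forall, Sum.elim_inl, Sum.elim_inr, LinearMap.neg_apply,
      neg_le_neg_iff]
    constructor
    · intro h
      exact ⟨fun i => (h i).le, fun i => (h i).ge⟩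
    · rintro ⟨h1, h2⟩ i
      exact le_antisymm (h1 i) (h2 i)
  rw [this]
  exact polySet_of_fintype _ _

lemma exists_between_finsets (L U : Finset ℝ) (h : ∀ l ∈ L, ∀ u ∈ U, l ≤ u) :
    ∃ x : ℝ, (∀ l ∈ L, l ≤ x) ∧ (∀ u ∈ U, x ≤ u) := by
  rcases L.eq_empty_or_nonempty with hL | hL
  · rcases U.eq_empty_or_nonempty with hU | hU
    · exact ⟨0, by simp [hL], by simp [hU]⟩
    · exact ⟨U.min' hU, by simp [hL], fun u hu => U.min'_le u hu⟩
  · exact ⟨L.max' hL, fun l hl => L.le_max' l hl,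
      fun u hu => Finset.max'_le _ _ _ (fun l hl => h l hl u hu)⟩

/-- Fourier–Motzkin elimination of one real variable. -/
lemma PolySet.image_snd_real {s : Set (ℝ × F)} (h : PolySet s) : PolySet (Prod.snd '' s) := by
  classical
  obtain ⟨n, f, b, rfl⟩ := h
  set a : Fin n → ℝ := fun i => f i (1, 0) with ha
  set g : Fin n → F →ₗ[ℝ] ℝ := fun i => (f i).comp (LinearMap.inr ℝ ℝ F) with hg
  have hf : ∀ i (x : ℝ) (y : F), f i (x, y) = a i * x + g i y := by
    intro i x y
    have h1 : (x, y) = x • ((1 : ℝ), (0 : F)) + ((0 : ℝ), y) := by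
      simp [Prod.ext_iff]
    calc f i (x, y) = f i (x • ((1 : ℝ), (0 : F)) + ((0 : ℝ), y)) := by rw [← h1]
      _ = x • f i (1, 0) + f i (0, y) := by rw [map_add, map_smul]
      _ = a i * x + g i y := by
          rw [smul_eq_mul, mul_comm]
          rfl
  set P2 : Set F := {y | (∀ i, a i = 0 → g i y ≤ b i) ∧
      ∀ p : Fin n × Fin n, 0 < a p.1 → a p.2 < 0 →
        a p.1 * g p.2 y - a p.2 * g p.1 y ≤ a p.1 * b p.2 - a p.2 * b p.1} with hP2
  have himg : Prod.snd '' {p : ℝ × F | ∀ i, f i p ≤ b i} = P2 := by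
    ext y
    constructor
    · rintro ⟨⟨x, y⟩, hx, rfl⟩
      simp only [Set.mem_setOf_eq] at hx
      simp only [hP2, Set.mem_setOf_eq]
      constructor
      · intro i hi
        have hxi := hx i
        rw [hf i x y, hi, zero_mul, zero_add] at hxi
        exact hxi
      · rintro ⟨i, j⟩ hi hj
        have h1 := hx i
        have h2 := hx j
        rw [hf] at h1 h2
        nlinarith [mul_le_mul_of_nonneg_left h2 hi.le,
          mul_le_mul_of_nonneg_left h1 (neg_nonneg.2 hj.le)]
    · intro hy
      obtain ⟨h0, hpm⟩ := hy
      set Lb : Finset ℝ := (Finset.univ.filter (fun j => a j < 0)).image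
        (fun j => (b j - g j y) / a j) with hLb
      set Ub : Finset ℝ := (Finset.univ.filter (fun i => 0 < a i)).image
        (fun i => (b i - g i y) / a i) with hUb
      have hbound : ∀ l ∈ Lb, ∀ u ∈ Ub, l ≤ u := by
        intro l hl u hu
        simp only [hLb, hUb, Finset.mem_image, Finset.mem_filter, Finset.mem_univ,
          true_and] at hl hu
        obtain ⟨j, hj, rfl⟩ := hl
        obtain ⟨i, hi, rfl⟩ := hu
        have hkey := hpm (i, j) hi hj
        have hnum : (b i - g i y) * a j - a i * (b j - g j y) ≤ 0 := by nlinarith [hkey]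
        have hden : a i * a j < 0 := mul_neg_of_pos_of_neg hi hj
        have heq : (b i - g i y) / a i - (b j - g j y) / a j
            = ((b i - g i y) * a j - a i * (b j - g j y)) / (a i * a j) :=
          div_sub_div _ _ hi.ne' hj.ne
        have hpos : 0 ≤ (b i - g i y) / a i - (b j - g j y) / a j := by
          rw [heq]
          exact div_nonneg_of_nonpos hnum hden.le
        linarith
      obtain ⟨x, hxL, hxU⟩ := exists_between_finsets Lb Ub hbound
      refine ⟨(x, y), ?_, rfl⟩
      simp only [Set.mem_setOf_eq]
      intro i
      rw [hf]
      rcases lt_trichotomy (a i) 0 with hneg | hzero | hpos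
      · have hmem : (b i - g i y) / a i ∈ Lb := by
          rw [hLb]
          exact Finset.mem_image_of_mem _ (by simp [hneg])
        have hle := hxL _ hmem
        have h2 : a i * x ≤ a i * ((b i - g i y) / a i) :=
          mul_le_mul_of_nonpos_left hle hneg.le
        have h3 : a i * ((b i - g i y) / a i) = b i - g i y := by
          rw [mul_comm, div_mul_cancel₀ _ hneg.ne]
        linarith
      · rw [hzero, zero_mul, zero_add]
        exact h0 i hzero
      · have hmem : (b i - g i y) / a i ∈ Ub := by
          rw [hUb]
          exact Finset.mem_image_of_mem _ (by simp [hpos])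
        have hle := hxU _ hmem
        have h2 : a i * x ≤ a i * ((b i - g i y) / a i) :=
          mul_le_mul_of_nonneg_left hle hpos.le
        have h3 : a i * ((b i - g i y) / a i) = b i - g i y := by
          rw [mul_comm, div_mul_cancel₀ _ hpos.ne']
        linarith
  rw [himg]
  have hrepr : P2 = {y | ∀ q : ({i : Fin n // a i = 0} ⊕
      {p : Fin n × Fin n // 0 < a p.1 ∧ a p.2 < 0}),
      (Sum.elim (fun i => g i.1) (fun p => a p.1.1 • g p.1.2 - a p.1.2 • g p.1.1) q) y ≤
      (Sum.elim (fun i => b i.1) (fun p => a p.1.1 * b p.1.2 - a p.1.2 * b p.1.1) q)} := by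
    ext y
    simp only [hP2, Set.mem_setOf_eq, Sum.forall, Subtype.forall, Sum.elim_inl, Sum.elim_inr,
      LinearMap.sub_apply, LinearMap.smul_apply, smul_eq_mul, Prod.forall, and_imp]
  rw [hrepr]
  exact polySet_of_fintype _ _

/-- The linear equivalence `(Fin (k+1) → ℝ) × F ≃ ℝ × ((Fin k → ℝ) × F)`. -/
noncomputable def succEquiv (k : ℕ) : ((Fin (k + 1) → ℝ) × F) ≃ₗ[ℝ] ℝ × ((Fin k → ℝ) × F) where
  toFun p := (p.1 0, (Fin.tail p.1, p.2))
  invFun q := (Fin.cons q.1 q.2.1, q.2.2)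
  map_add' p q := rfl
  map_smul' c p := rfl
  left_inv p := by
    refine Prod.ext ?_ rfl
    exact Fin.cons_self_tail p.1
  right_inv q := by
    refine Prod.ext ?_ (Prod.ext ?_ rfl)
    · simp
    · simp [Fin.tail_cons]

lemma polySet_image_snd_pi (k : ℕ) (s : Set ((Fin k → ℝ) × F)) (h : PolySet s) :
    PolySet (Prod.snd '' s) := by
  induction k with
  | zero =>
    have heq : Prod.snd '' s = ⇑(LinearMap.inr ℝ (Fin 0 → ℝ) F) ⁻¹' s := by
      ext y
      constructor
      · rintro ⟨⟨v, y⟩, hv, rfl⟩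
        have : (0 : Fin 0 → ℝ) = v := Subsingleton.elim _ _
        simpa [LinearMap.inr_apply, this] using hv
      · intro hy
        exact ⟨_, hy, rfl⟩
    rw [heq]
    exact h.preimage _
  | succ k ih =>
    have hcomp : Prod.snd '' s = Prod.snd '' (Prod.snd '' (⇑(succEquiv k (F := F)) '' s)) := by
      rw [← Set.image_comp, ← Set.image_comp]
      rfl
    rw [hcomp]
    exact ih _ ((h.image_equiv _).image_snd_real)

/-- The image of a polyhedron under a linear map between finite-dimensional spaces
is a polyhedron. -/
lemma PolySet.image [FiniteDimensional ℝ E] [FiniteDimensional ℝ F] (L : E →ₗ[ℝ] F)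
    {s : Set E} (h : PolySet s) : PolySet (⇑L '' s) := by
  classical
  set T : Set (E × F) := {p | p.1 ∈ s ∧ L p.1 = p.2} with hT
  have hTpoly : PolySet T := by
    have h1 : PolySet (⇑(LinearMap.fst ℝ E F) ⁻¹' s) := h.preimage _
    have h2 : PolySet {p : E × F | ∀ i : Fin (Module.finrank ℝ F),
        (((Module.finBasis ℝ F).coord i).comp
          ((L.comp (LinearMap.fst ℝ E F)) - LinearMap.snd ℝ E F)) p = 0} :=
      polySet_eq _ _
    have heq : T = (⇑(LinearMap.fst ℝ E F) ⁻¹' s) ∩ {p : E × F | ∀ i : Fin (Module.finrank ℝ F),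
        (((Module.finBasis ℝ F).coord i).comp
          ((L.comp (LinearMap.fst ℝ E F)) - LinearMap.snd ℝ E F)) p = 0} := by
      ext p
      simp only [hT, Set.mem_setOf_eq, Set.mem_inter_iff, Set.mem_preimage, LinearMap.comp_apply,
        LinearMap.sub_apply, LinearMap.fst_apply, LinearMap.snd_apply]
      constructor
      · rintro ⟨hp, hLp⟩
        refine ⟨hp, fun i => ?_⟩
        rw [hLp, sub_self, map_zero]
      · rintro ⟨hp, hc⟩
        refine ⟨hp, ?_⟩
        have : L p.1 - p.2 = 0 := (Module.Basis.forall_coord_eq_zero_iff _).mp hc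
        exact sub_eq_zero.mp this
    rw [heq]
    exact h1.inter h2
  have himg : ⇑L '' s = Prod.snd '' T := by
    ext y
    constructor
    · rintro ⟨x, hx, rfl⟩
      exact ⟨(x, L x), ⟨hx, rfl⟩, rfl⟩
    · rintro ⟨⟨x, y⟩, ⟨hx, hxy⟩, rfl⟩
      exact ⟨x, hx, hxy⟩
  rw [himg]
  set e : (E × F) ≃ₗ[ℝ] ((Fin (Module.finrank ℝ E) → ℝ) × F) :=
    (Module.finBasis ℝ E).equivFun.prodCongr (LinearEquiv.refl ℝ F) with he
  have hcomp : Prod.snd '' T = Prod.snd '' (⇑e '' T) := by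
    rw [← Set.image_comp]
    rfl
  rw [hcomp]
  exact polySet_image_snd_pi _ _ (hTpoly.image_equiv e)

end Poly

/-! ### Topological lemmas -/

section Topo

variable {Z : Type*} [AddCommGroup Z] [Module ℝ Z] [TopologicalSpace Z]
  [IsTopologicalAddGroup Z] [ContinuousSMul ℝ Z] [T2Space Z]

/-- The sum of a closed submodule and a finite-dimensional submodule is closed. -/
lemma isClosed_sup_of_finiteDimensional (Z₀ C : Submodule ℝ Z)
    (h₀ : IsClosed (Z₀ : Set Z)) [FiniteDimensional ℝ C] :
    IsClosed ((Z₀ ⊔ C : Submodule ℝ Z) : Set Z) := by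
  haveI : IsClosed (Z₀ : Set Z) := h₀
  have hset : (Z₀ ⊔ C : Submodule ℝ Z) = Submodule.comap Z₀.mkQ (C.map Z₀.mkQ) := by
    rw [Submodule.comap_map_eq, Submodule.ker_mkQ, sup_comm]
  have hcl : IsClosed ((C.map Z₀.mkQ : Submodule ℝ (Z ⧸ Z₀)) : Set (Z ⧸ Z₀)) :=
    Submodule.closed_of_finiteDimensional _
  have hpre : ((Z₀ ⊔ C : Submodule ℝ Z) : Set Z)
      = ⇑Z₀.mkQ ⁻¹' ((C.map Z₀.mkQ : Submodule ℝ (Z ⧸ Z₀)) : Set (Z ⧸ Z₀)) := by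
    rw [hset]
    rfl
  rw [hpre]
  exact hcl.preimage Z₀.isOpenQuotientMap_mkQ.continuous

variable [LocallyConvexSpace ℝ Z]

/-- Hahn–Banach: a linear functional on a finite-dimensional subspace transversal to a
closed subspace extends to a continuous functional vanishing on the closed subspace. -/
lemma exists_extension_vanishing (Z₀ V : Submodule ℝ Z) (hZ₀ : IsClosed (Z₀ : Set Z))
    [FiniteDimensional ℝ V] (hd : Z₀ ⊓ V = ⊥) (g : V →ₗ[ℝ] ℝ) :
    ∃ φ : Z →L[ℝ] ℝ, (∀ u ∈ Z₀, φ u = 0) ∧ ∀ v : V, φ v = g v := by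
  classical
  set B := Module.finBasis ℝ V with hB
  have main : ∀ j : Fin (Module.finrank ℝ V), ∃ φ : Z →L[ℝ] ℝ,
      (∀ u ∈ Z₀, φ u = 0) ∧ (∀ i, φ (B i) = if i = j then 1 else 0) := by
    intro j
    set Wj : Submodule ℝ Z := Z₀ ⊔ Submodule.span ℝ ((fun i => (B i : Z)) '' {i | i ≠ j})
      with hWj
    have hspan_le : Submodule.span ℝ ((fun i => (B i : Z)) '' {i | i ≠ j}) ≤ V := by
      rw [Submodule.span_le]
      rintro _ ⟨i, -, rfl⟩
      exact (B i).2
    haveI hfin : FiniteDimensional ℝ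
        (Submodule.span ℝ ((fun i => (B i : Z)) '' {i | i ≠ j})) :=
      FiniteDimensional.span_of_finite ℝ ((Set.toFinite _).image _)
    have hclosed : IsClosed (Wj : Set Z) := isClosed_sup_of_finiteDimensional _ _ hZ₀
    have hnotmem : ((B j : Z)) ∉ Wj := by
      intro hmem
      rw [hWj, Submodule.mem_sup] at hmem
      obtain ⟨u, hu, w, hw, huw⟩ := hmem
      have hwV : w ∈ V := hspan_le hw
      have huV : u ∈ V := by
        have hueq : u = (B j : Z) - w := eq_sub_of_add_eq huw
        rw [hueq]
        exact V.sub_mem (B j).2 hwV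
      have hu0 : u = 0 := by
        have : u ∈ Z₀ ⊓ V := ⟨hu, huV⟩
        rw [hd] at this
        simpa using this
      have hBjw : (B j : Z) = w := by
        rw [hu0, zero_add] at huw
        exact huw.symm
      -- transfer to V and contradict linear independence
      have himg : (fun i => (B i : Z)) '' {i | i ≠ j} = ⇑V.subtype '' (⇑B '' {i | i ≠ j}) := by
        rw [Set.image_image]
        rfl
      rw [himg, ← Submodule.map_span] at hw
      rw [← hBjw] at hw
      obtain ⟨v, hv, hveq⟩ := hw
      have hvBj : v = B j := Subtype.ext hveq
      rw [hvBj] at hv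
      exact B.linearIndependent.notMem_span_image (by simp) hv
    obtain ⟨f, u, hfu, hfx⟩ := geometric_hahn_banach_closed_point Wj.convex hclosed hnotmem
    have hzero : ∀ w ∈ Wj, f w = 0 := by
      intro w hw
      by_contra hne
      have hall : ∀ t : ℝ, t * f w < u := by
        intro t
        have := hfu (t • w) (Wj.smul_mem t hw)
        simpa using this
      have := hall ((u + 1) / f w)
      rw [div_mul_cancel₀ _ hne] at this
      linarith
    have hu0 : (0 : ℝ) < u := by
      have := hfu 0 Wj.zero_mem
      simpa using this
    have hfj : f (B j) ≠ 0 := by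
      intro hfj0
      rw [hfj0] at hfx
      linarith
    refine ⟨(f (B j))⁻¹ • f, ?_, ?_⟩
    · intro v hv
      have : f v = 0 := hzero v (Submodule.mem_sup_left hv)
      simp [this]
    · intro i
      by_cases hij : i = j
      · subst hij
        simp [inv_mul_cancel₀ hfj]
      · have hmem : (B i : Z) ∈ Wj :=
          Submodule.mem_sup_right (Submodule.subset_span ⟨i, hij, rfl⟩)
        have : f (B i) = 0 := hzero _ hmem
        simp [hij, this]
  choose φ hφ0 hφB using main
  refine ⟨∑ j, g (B j) • φ j, ?_, ?_⟩
  · intro u hu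
    simp only [ContinuousLinearMap.coe_sum', Finset.sum_apply, ContinuousLinearMap.coe_smul',
      Pi.smul_apply, smul_eq_mul]
    rw [Finset.sum_eq_zero]
    intro j _
    rw [hφ0 j u hu, mul_zero]
  · intro v
    have hrepr : (v : Z) = ∑ i, B.repr v i • (B i : Z) := by
      conv_lhs => rw [← B.sum_repr v]
      simp only [Submodule.coe_sum, Submodule.coe_smul]
    have hφv : ∀ j, φ j (v : Z) = B.repr v j := by
      intro j
      rw [hrepr, map_sum]
      simp only [map_smul, hφB, smul_eq_mul, mul_ite, mul_one, mul_zero]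
      simp
    have hgv : g v = ∑ j, g (B j) * B.repr v j := by
      conv_lhs => rw [← B.sum_repr v]
      rw [map_sum]
      refine Finset.sum_congr rfl ?_
      intro j _
      rw [map_smul, smul_eq_mul, mul_comm]
    simp only [ContinuousLinearMap.coe_sum', Finset.sum_apply, ContinuousLinearMap.coe_smul',
      Pi.smul_apply, smul_eq_mul]
    rw [hgv]
    refine Finset.sum_congr rfl ?_
    intro j _
    rw [hφv]

end Topo

/-- If the graph of `F` is
`{(x,y) : A₁ x + A₂ y = z, ⟨xᵢ*,x⟩ + ⟨yᵢ*,y⟩ ≤ βᵢ}` and `A₂` maps every closed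
finite-codimensional subspace of `Y` onto a closed set, then `dom F` is a
generalized polyhedral convex set. -/
theorem dom_is_gpc
    {X Y Z : Type*}
    [AddCommGroup X] [Module ℝ X] [TopologicalSpace X] [IsTopologicalAddGroup X]
    [ContinuousSMul ℝ X] [LocallyConvexSpace ℝ X] [T2Space X]
    [AddCommGroup Y] [Module ℝ Y] [TopologicalSpace Y] [IsTopologicalAddGroup Y]
    [ContinuousSMul ℝ Y] [LocallyConvexSpace ℝ Y] [T2Space Y]
    [AddCommGroup Z] [Module ℝ Z] [TopologicalSpace Z] [IsTopologicalAddGroup Z]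
    [ContinuousSMul ℝ Z] [LocallyConvexSpace ℝ Z] [T2Space Z]
    (A₁ : X →L[ℝ] Z) (A₂ : Y →L[ℝ] Z) (z : Z)
    {m : ℕ} (xs : Fin m → X →L[ℝ] ℝ) (ys : Fin m → Y →L[ℝ] ℝ) (β : Fin m → ℝ)
    (hA₂ : ∀ Y₀ : Submodule ℝ Y, IsClosed (Y₀ : Set Y) →
      FiniteDimensional ℝ (Y ⧸ Y₀) → IsClosed (A₂ '' (Y₀ : Set Y))) :
    IsGPC {x : X | ∃ y : Y, A₁ x + A₂ y = z ∧ ∀ i, xs i x + ys i y ≤ β i} := by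
  classical
  -- the finite-codimensional kernel Y₀ of the functionals ysᵢ
  set Ψ : Y →ₗ[ℝ] (Fin m → ℝ) := LinearMap.pi (fun i => (ys i : Y →ₗ[ℝ] ℝ)) with hΨ
  set Y₀ : Submodule ℝ Y := LinearMap.ker Ψ with hY₀
  have hY₀closed : IsClosed (Y₀ : Set Y) := by
    have hcont : Continuous (fun y : Y => fun i => ys i y) :=
      continuous_pi (fun i => (ys i).continuous)
    have : (Y₀ : Set Y) = (fun y : Y => fun i => ys i y) ⁻¹' {0} := by
      ext y
      simp only [hY₀, SetLike.mem_coe, LinearMap.mem_ker, Set.mem_preimage, Set.mem_singleton_iff]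
      constructor
      · intro h
        funext i
        exact congrFun h i
      · intro h
        funext i
        exact congrFun h i
    rw [this]
    exact IsClosed.preimage hcont isClosed_singleton
  haveI hY₀cofin : FiniteDimensional ℝ (Y ⧸ Y₀) :=
    Module.Finite.equiv (LinearMap.quotKerEquivRange Ψ).symm
  have hysY₀ : ∀ i, ∀ y ∈ Y₀, ys i y = 0 := by
    intro i y hy
    have : Ψ y = 0 := hy
    exact congrFun this i
  -- a finite-dimensional complement C of Y₀
  obtain ⟨C, hC⟩ := Y₀.exists_isCompl
  haveI hCfin : FiniteDimensional ℝ C :=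
    Module.Finite.equiv (Submodule.quotientEquivOfIsCompl Y₀ C hC)
  -- the closed subspace Z₀ = A₂(Y₀) and M = Z₀ + A₂(C)
  set Z₀ : Submodule ℝ Z := Y₀.map (A₂ : Y →ₗ[ℝ] Z) with hZ₀
  have hZ₀closed : IsClosed (Z₀ : Set Z) := by
    have := hA₂ Y₀ hY₀closed hY₀cofin
    simpa [hZ₀, Submodule.map_coe] using this
  set C' : Submodule ℝ Z := C.map (A₂ : Y →ₗ[ℝ] Z) with hC'
  haveI hC'fin : FiniteDimensional ℝ C' := Module.Finite.map _ _
  set M : Submodule ℝ Z := Z₀ ⊔ C' with hM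
  have hMclosed : IsClosed (M : Set Z) := isClosed_sup_of_finiteDimensional _ _ hZ₀closed
  -- a global complement W of Z₀ and the projection p along Z₀
  obtain ⟨W, hW⟩ := Z₀.exists_isCompl
  set pr : Z →ₗ[ℝ] W := W.linearProjOfIsCompl Z₀ hW.symm with hpr
  set p : Z →ₗ[ℝ] Z := W.subtype.comp pr with hp
  have hp0 : ∀ u ∈ Z₀, p u = 0 := by
    intro u hu
    simp only [hp, LinearMap.comp_apply, hpr]
    rw [show W.linearProjOfIsCompl Z₀ hW.symm u = 0 from Submodule.projectionOnto_apply_of_mem_right hW.symm hu]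
    rfl
  have hpW : ∀ w : W, p (w : Z) = w := by
    intro w
    simp only [hp, LinearMap.comp_apply, hpr]
    rw [show W.linearProjOfIsCompl Z₀ hW.symm (w : Z) = w from Submodule.projectionOnto_apply_left hW.symm w]
    rfl
  have hpmemW : ∀ x : Z, p x ∈ W := fun x => (pr x).2
  have hsub : ∀ x : Z, x - p x ∈ Z₀ := by
    intro x
    have hx := Submodule.projection_add_projection_eq_self hW x
    have : x - p x = (Z₀.linearProjOfIsCompl W hW x : Z) := by
      simp only [hp, LinearMap.comp_apply, hpr]
      have h' : (Z₀.linearProjOfIsCompl W hW x : Z) + (W.linearProjOfIsCompl Z₀ hW.symm x : Z)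
          = x := hx
      rw [Submodule.coe_subtype, eq_comm, eq_sub_iff_add_eq]
      exact h'
    rw [this]
    exact (Z₀.linearProjOfIsCompl W hW x).2
  have hsame : ∀ z₁ z₂ : Z, z₁ - z₂ ∈ Z₀ ↔ p z₁ = p z₂ := by
    intro z₁ z₂
    constructor
    · intro h
      have h' := hp0 _ h
      rw [map_sub] at h'
      exact sub_eq_zero.mp h'
    · intro h
      have h1 := hsub z₁
      have h2 := hsub z₂
      have : z₁ - z₂ = (z₁ - p z₁) - (z₂ - p z₂) := by
        rw [h]
        abel
      rw [this]
      exact Z₀.sub_mem h1 h2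
  -- the finite-dimensional space V = W ⊓ M
  set V : Submodule ℝ Z := W ⊓ M with hV
  have hpM : ∀ w ∈ M, p w ∈ V := by
    intro w hw
    refine ⟨hpmemW w, ?_⟩
    have : p w = w - (w - p w) := by abel
    rw [this]
    exact M.sub_mem hw (Submodule.mem_sup_left (hsub w))
  have hVle : V ≤ Submodule.map p C' := by
    intro v hv
    have hvW : v ∈ W := (Submodule.mem_inf.mp hv).1
    have hvM2 : v ∈ Z₀ ⊔ C' := (Submodule.mem_inf.mp hv).2
    obtain ⟨u, hu, c, hc, huc⟩ := Submodule.mem_sup.mp hvM2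
    have hpv : p v = v := by
      have : v = (⟨v, hvW⟩ : W) := rfl
      rw [this, hpW]
    have : p c = v := by
      have := congrArg p huc
      rw [map_add, hp0 u hu, zero_add] at this
      rw [this, hpv]
    exact ⟨c, hc, this⟩
  haveI hVfin : FiniteDimensional ℝ V := by
    haveI : FiniteDimensional ℝ (Submodule.map p C') := Module.Finite.map _ _
    exact Submodule.finiteDimensional_of_le hVle
  have hdisj : Z₀ ⊓ V = ⊥ := by
    rw [eq_bot_iff]
    intro x hx
    obtain ⟨hx0, hxW, -⟩ := hx
    have : x ∈ Z₀ ⊓ W := ⟨hx0, hxW⟩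
    rw [hW.inf_eq_bot] at this
    exact this
  -- the finite-dimensional polyhedron P
  set φC : C →ₗ[ℝ] V := LinearMap.codRestrict V ((p.comp (A₂ : Y →ₗ[ℝ] Z)).comp C.subtype)
    (fun c => hpM _ (Submodule.mem_sup_right (Submodule.mem_map_of_mem c.2))) with hφC
  set Φ : (C × (Fin m → ℝ)) →ₗ[ℝ] (V × (Fin m → ℝ)) := φC.prodMap LinearMap.id with hΦ
  set Q : Set (C × (Fin m → ℝ)) := {ct | ∀ i, ys i (ct.1 : Y) ≤ ct.2 i} with hQ
  have hQpoly : PolySet Q := by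
    have : Q = {ct : C × (Fin m → ℝ) | ∀ i : Fin m,
        (((ys i : Y →ₗ[ℝ] ℝ).comp C.subtype).comp (LinearMap.fst ℝ C (Fin m → ℝ))
          - (LinearMap.proj i).comp (LinearMap.snd ℝ C (Fin m → ℝ))) ct ≤ 0} := by
      ext ct
      simp only [hQ, Set.mem_setOf_eq, LinearMap.sub_apply, LinearMap.comp_apply,
        LinearMap.fst_apply, LinearMap.snd_apply, LinearMap.proj_apply, Submodule.coe_subtype,
        ContinuousLinearMap.coe_coe, sub_nonpos]
    rw [this]
    exact polySet_of_fintype _ _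
  have hPpoly : PolySet (⇑Φ '' Q) := hQpoly.image Φ
  obtain ⟨n, f, b, hPeq⟩ := hPpoly
  -- the data for the GPC representation
  set g : Fin n → V →ₗ[ℝ] ℝ := fun k => (f k).comp (LinearMap.inl ℝ V (Fin m → ℝ)) with hg
  set d : Fin n → Fin m → ℝ := fun k i => f k (0, fun j => if i = j then 1 else 0) with hd
  have hfdec : ∀ k (v : V) (t : Fin m → ℝ), f k (v, t) = g k v + ∑ i, t i * d k i := by
    intro k v t
    have hsplit : ((v, t) : V × (Fin m → ℝ)) = (v, 0) + (0, t) := by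
      simp
    rw [hsplit, map_add]
    congr 1
    have := LinearMap.pi_apply_eq_sum_univ ((f k).comp (LinearMap.inr ℝ V (Fin m → ℝ))) t
    simpa [hd, smul_eq_mul] using this
  -- Hahn-Banach extensions
  have hφex : ∀ k, ∃ φ : Z →L[ℝ] ℝ, (∀ u ∈ Z₀, φ u = 0) ∧ ∀ v : V, φ v = g k v :=
    fun k => exists_extension_vanishing Z₀ V hZ₀closed hdisj (g k)
  choose φ hφ0 hφV using hφex
  have hφM : ∀ k w (hw : w ∈ M), φ k w = g k ⟨p w, hpM w hw⟩ := by
    intro k w hw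
    have h1 : φ k w = φ k (w - p w) + φ k (p w) := by
      rw [← map_add]
      congr 1
      abel
    rw [h1, hφ0 k _ (hsub w), zero_add]
    exact hφV k ⟨p w, hpM w hw⟩
  -- the affine subspace L
  set Aaff : X →ᵃ[ℝ] Z := AffineMap.mk (fun x => z - A₁ x) (-(A₁ : X →ₗ[ℝ] Z))
    (by
      intro q v
      simp only [LinearMap.neg_apply, ContinuousLinearMap.coe_coe, vadd_eq_add, map_add]
      abel) with hAaff
  set L : AffineSubspace ℝ X := AffineSubspace.comap Aaff M.toAffineSubspace with hL
  have hmemL : ∀ x : X, x ∈ L ↔ z - A₁ x ∈ M := by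
    intro x
    rw [hL, AffineSubspace.mem_comap, Submodule.mem_toAffineSubspace]
    rfl
  have hLclosed : IsClosed (L : Set X) := by
    have hset : (L : Set X) = (fun x : X => z - A₁ x) ⁻¹' (M : Set Z) := by
      ext x
      simp only [SetLike.mem_coe, hmemL, Set.mem_preimage]
    rw [hset]
    exact hMclosed.preimage (continuous_const.sub A₁.continuous)
  -- the continuous linear functionals and bounds
  set Ff : Fin n → X →L[ℝ] ℝ := fun k => -((φ k).comp A₁) - ∑ i, d k i • xs i with hFf
  set α : Fin n → ℝ := fun k => b k - φ k z - ∑ i, β i * d k i with hα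
  have hFfapp : ∀ k x, Ff k x = -(φ k (A₁ x)) - ∑ i, d k i * xs i x := by
    intro k x
    simp only [hFf, ContinuousLinearMap.coe_sub', Pi.sub_apply, ContinuousLinearMap.neg_apply,
      ContinuousLinearMap.coe_comp', Function.comp_apply, ContinuousLinearMap.coe_sum',
      Finset.sum_apply, ContinuousLinearMap.coe_smul', Pi.smul_apply, smul_eq_mul]
  -- key equivalence on L
  refine ⟨n, Ff, α, L, hLclosed, ?_⟩
  ext x
  simp only [Set.mem_setOf_eq]
  -- first reformulate membership in the domain
  have hdom : (∃ y : Y, A₁ x + A₂ y = z ∧ ∀ i, xs i x + ys i y ≤ β i)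
      ↔ ∃ c : C, (z - A₁ x) - A₂ (c : Y) ∈ Z₀ ∧ ∀ i, ys i (c : Y) ≤ β i - xs i x := by
    constructor
    · rintro ⟨y, hy, hineq⟩
      obtain ⟨y₀, c, hsum, -⟩ := Submodule.existsUnique_add_of_isCompl hC y
      refine ⟨c, ?_, ?_⟩
      · have hA₂y : A₂ y = z - A₁ x := by
          rw [eq_sub_iff_add_eq, add_comm]
          exact hy
        have : (z - A₁ x) - A₂ (c : Y) = A₂ (y₀ : Y) := by
          rw [← hA₂y, ← hsum, map_add]
          abel
        rw [this]
        exact Submodule.mem_map_of_mem y₀.2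
      · intro i
        have hys : ys i y = ys i (c : Y) := by
          rw [← hsum, map_add, hysY₀ i _ y₀.2, zero_add]
        have := hineq i
        rw [hys] at this
        linarith
    · rintro ⟨c, hmem, hineq⟩
      obtain ⟨y₀, hy₀, heq⟩ := hmem
      have heq' : A₂ y₀ = (z - A₁ x) - A₂ (c : Y) := heq
      refine ⟨y₀ + (c : Y), ?_, ?_⟩
      · rw [map_add, heq']
        abel
      · intro i
        rw [map_add, hysY₀ i _ hy₀, zero_add]
        linarith [hineq i]
  -- membership in the domain implies membership in L
  have hdomL : (∃ y : Y, A₁ x + A₂ y = z ∧ ∀ i, xs i x + ys i y ≤ β i) → x ∈ L := by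
    intro h
    obtain ⟨c, hmem, -⟩ := hdom.mp h
    rw [hmemL]
    have : z - A₁ x = ((z - A₁ x) - A₂ (c : Y)) + A₂ (c : Y) := by abel
    rw [this]
    exact Submodule.add_mem _ (Submodule.mem_sup_left hmem)
      (Submodule.mem_sup_right (Submodule.mem_map_of_mem c.2))
  -- for x ∈ L, translate the existence of c into membership in the polyhedron
  have hchain : ∀ hxM : z - A₁ x ∈ M,
      (∃ c : C, (z - A₁ x) - A₂ (c : Y) ∈ Z₀ ∧ ∀ i, ys i (c : Y) ≤ β i - xs i x)
      ↔ ((⟨p (z - A₁ x), hpM _ hxM⟩ : V), fun i => β i - xs i x) ∈ ⇑Φ '' Q := by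
    intro hxM
    constructor
    · rintro ⟨c, hmem, hineq⟩
      refine ⟨(c, fun i => β i - xs i x), hineq, ?_⟩
      have hpc : p (A₂ (c : Y)) = p (z - A₁ x) := by
        apply (hsame _ _).mp
        have : A₂ (c : Y) - (z - A₁ x) = -((z - A₁ x) - A₂ (c : Y)) := by abel
        rw [this]
        exact Z₀.neg_mem hmem
      simp only [hΦ, LinearMap.prodMap_apply, LinearMap.id_apply]
      refine Prod.ext ?_ rfl
      apply Subtype.ext
      show ((φC c : V) : Z) = p (z - A₁ x)
      rw [← hpc]
      rfl
    · rintro ⟨⟨c, t⟩, hQmem, hΦeq⟩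
      simp only [hΦ, LinearMap.prodMap_apply, LinearMap.id_apply] at hΦeq
      have ht : t = fun i => β i - xs i x := congrArg Prod.snd hΦeq
      have hcval : ((φC c : V) : Z) = p (z - A₁ x) :=
        congrArg (fun q : V × (Fin m → ℝ) => (q.1 : Z)) hΦeq
      have hpc : p (A₂ (c : Y)) = p (z - A₁ x) := by
        rw [← hcval]
        rfl
      refine ⟨c, (hsame _ _).mpr hpc.symm, ?_⟩
      intro i
      have := hQmem i
      rw [ht] at this
      exact this
  -- for x ∈ L, translate each polyhedral inequality into the continuous one
  have htrans : ∀ hxM : z - A₁ x ∈ M, ∀ k,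
      (f k ((⟨p (z - A₁ x), hpM _ hxM⟩ : V), fun i => β i - xs i x) ≤ b k)
      ↔ Ff k x ≤ α k := by
    intro hxM k
    rw [hfdec, ← hφM k _ hxM, hFfapp]
    simp only [hα]
    rw [map_sub]
    have hsplit : ∑ i, (β i - xs i x) * d k i
        = ∑ i, β i * d k i - ∑ i, d k i * xs i x := by
      rw [← Finset.sum_sub_distrib]
      exact Finset.sum_congr rfl (fun i _ => by ring)
    constructor <;> intro h <;> [linarith [hsplit]; linarith [hsplit]]
  constructor
  · intro h
    have hxL : x ∈ L := hdomL h
    have hxM : z - A₁ x ∈ M := (hmemL x).mp hxL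
    refine ⟨hxL, fun k => ?_⟩
    have hPmem := (hchain hxM).mp (hdom.mp h)
    rw [hPeq] at hPmem
    exact (htrans hxM k).mp (hPmem k)
  · rintro ⟨hxL, hineq⟩
    have hxM : z - A₁ x ∈ M := (hmemL x).mp hxL
    apply hdom.mpr
    apply (hchain hxM).mpr
    rw [hPeq]
    intro k
    exact (htrans hxM k).mpr (hineq k)
end

section
/- Let X, Y, Z be locally convex Hausdorff topological vector spaces and F : X ⇒ Y a multifunction whose graph is {(x,y) : A₁(x) + A₂(y) = z, ⟨x_i*, x⟩ + ⟨y_i*, y⟩ ≤ β_i, i = 1,…,m}. If A₁ is closed under finite-codimensional subspaces, then rge F = {y : ∃ x, y ∈ F(x)} is a generalized polyhedral convex set in Y. -/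
set_option synthInstance.maxHeartbeats 1000000
set_option maxHeartbeats 1000000

open Finset in
/-- One step of Fourier–Motzkin elimination. -/
theorem fm_step {E : Type*} [AddCommGroup E] [Module ℝ E] [TopologicalSpace E]
    {ι : Type} [Fintype ι] (e : ι → ℝ) (h : ι → E →L[ℝ] ℝ) :
    ∃ (κ : Type) (_ : Fintype κ) (g : κ → E →L[ℝ] ℝ),
      ∀ p : E, (∃ t : ℝ, ∀ i, t * e i ≤ h i p) ↔ ∀ q, 0 ≤ g q p := by
  classical
  refine ⟨ι ⊕ ι × ι, inferInstance,
    Sum.elim (fun i => if e i = 0 then h i else 0)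
      (fun ij => if 0 < e ij.1 ∧ e ij.2 < 0 then e ij.1 • h ij.2 - e ij.2 • h ij.1 else 0), ?_⟩
  intro p
  constructor
  · rintro ⟨t, ht⟩ q
    rcases q with i | ⟨i, j⟩
    · by_cases he : e i = 0
      · simp only [Sum.elim_inl, if_pos he]
        have := ht i; rw [he, mul_zero] at this; exact this
      · simp [Sum.elim_inl, if_neg he]
    · by_cases hc : 0 < e i ∧ e j < 0
      · simp only [Sum.elim_inr, if_pos hc, ContinuousLinearMap.sub_apply,
          ContinuousLinearMap.smul_apply, smul_eq_mul, sub_nonneg]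
        have h1 := ht i; have h2 := ht j
        nlinarith [hc.1, hc.2]
      · simp [Sum.elim_inr, if_neg hc]
  · intro H
    have hzero : ∀ i, e i = 0 → 0 ≤ h i p := by
      intro i hei
      have := H (Sum.inl i); simpa [Sum.elim_inl, if_pos hei] using this
    have hpair : ∀ i j, 0 < e i → e j < 0 → h j p / e j ≤ h i p / e i := by
      intro i j hi' hj'
      have key := H (Sum.inr (i, j))
      rw [Sum.elim_inr, if_pos ⟨hi', hj'⟩] at key
      simp only [ContinuousLinearMap.sub_apply, ContinuousLinearMap.smul_apply,
        smul_eq_mul, sub_nonneg] at key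
      rw [le_div_iff₀ hi', div_mul_eq_mul_div, div_le_iff_of_neg hj']
      linarith
    set lo : Finset ι := univ.filter (fun j => e j < 0) with hlo_def
    by_cases hlo : lo.Nonempty
    · refine ⟨lo.sup' hlo (fun j => h j p / e j), fun i => ?_⟩
      rcases lt_trichotomy (e i) 0 with hei | hei | hei
      · -- e i < 0 : i contributes a lower bound, sup ≥ it
        have hmem : i ∈ lo := by simp [hlo_def, hei]
        have hle : h i p / e i ≤ lo.sup' hlo (fun j => h j p / e j) :=
          Finset.le_sup' (fun j => h j p / e j) hmem
        calc lo.sup' hlo (fun j => h j p / e j) * e i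
            ≤ (h i p / e i) * e i := by
              exact mul_le_mul_of_nonpos_right hle (le_of_lt hei)
          _ = h i p := div_mul_cancel₀ _ (ne_of_lt hei)
      · rw [hei, mul_zero]; exact hzero i hei
      · -- 0 < e i : upper bound, sup of lower bounds ≤ it
        rw [← le_div_iff₀ hei]
        refine Finset.sup'_le hlo _ (fun j hj => ?_)
        have hj' : e j < 0 := by simpa [hlo_def] using hj
        exact hpair i j hei hj'
    · -- no lower bounds
      set hi : Finset ι := univ.filter (fun i => 0 < e i) with hhi_def
      by_cases hhi : hi.Nonempty
      · refine ⟨hi.inf' hhi (fun i => h i p / e i), fun i => ?_⟩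
        rcases lt_trichotomy (e i) 0 with hei | hei | hei
        · exact absurd ⟨i, by simp [hlo_def, hei]⟩ hlo
        · rw [hei, mul_zero]; exact hzero i hei
        · have hmem : i ∈ hi := by simp [hhi_def, hei]
          have hle : hi.inf' hhi (fun i => h i p / e i) ≤ h i p / e i :=
            Finset.inf'_le (fun i => h i p / e i) hmem
          calc hi.inf' hhi (fun i => h i p / e i) * e i
              ≤ (h i p / e i) * e i := mul_le_mul_of_nonneg_right hle (le_of_lt hei)
            _ = h i p := div_mul_cancel₀ _ (ne_of_gt hei)
      · refine ⟨0, fun i => ?_⟩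
        rcases lt_trichotomy (e i) 0 with hei | hei | hei
        · exact absurd ⟨i, by simp [hlo_def, hei]⟩ hlo
        · rw [hei, mul_zero]; exact hzero i hei
        · exact absurd ⟨i, by simp [hhi_def, hei]⟩ hhi

universe u

/-- Full Fourier–Motzkin elimination of `n` real variables. -/
theorem fm_full : ∀ (n : ℕ) {E : Type u} [AddCommGroup E] [Module ℝ E] [TopologicalSpace E]
    {ι : Type} [Fintype ι] (d : ι → Fin n → ℝ) (g : ι → E →L[ℝ] ℝ),
    ∃ (N : ℕ) (g' : Fin N → E →L[ℝ] ℝ),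
      ∀ p : E, (∃ u : Fin n → ℝ, ∀ i, (∑ l, u l * d i l) ≤ g i p) ↔ ∀ q, 0 ≤ g' q p := by
  intro n
  induction n with
  | zero =>
    intro E _ _ _ ι _ d g
    refine ⟨Fintype.card ι, fun q => g ((Fintype.equivFin ι).symm q), fun p => ?_⟩
    constructor
    · rintro ⟨u, hu⟩ q
      simpa using hu ((Fintype.equivFin ι).symm q)
    · intro H
      refine ⟨fun l => 0, fun i => ?_⟩
      simpa using H (Fintype.equivFin ι i)
  | succ n IH =>
    intro E _ _ _ ι _ d g
    classical
    set hf : ι → (E × (Fin n → ℝ)) →L[ℝ] ℝ := fun i =>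
      (g i).comp (ContinuousLinearMap.fst ℝ E (Fin n → ℝ)) -
        (∑ l : Fin n, d i l.succ • (ContinuousLinearMap.proj l : (Fin n → ℝ) →L[ℝ] ℝ)).comp
          (ContinuousLinearMap.snd ℝ E (Fin n → ℝ)) with hhf
    have hfval : ∀ i p (u' : Fin n → ℝ), hf i (p, u') = g i p - ∑ l, u' l * d i l.succ := by
      intro i p u'
      simp only [hhf, ContinuousLinearMap.sub_apply, ContinuousLinearMap.comp_apply,
        ContinuousLinearMap.coe_fst', ContinuousLinearMap.coe_snd',
        ContinuousLinearMap.sum_apply, ContinuousLinearMap.smul_apply,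
        ContinuousLinearMap.proj_apply, smul_eq_mul]
      ring_nf
      congr 1
      exact Finset.sum_congr rfl fun l _ => by ring
    obtain ⟨κ, instκ, g₁, hg₁⟩ := fm_step (fun i => d i 0) hf
    set d' : κ → Fin n → ℝ := fun q l => -(g₁ q (0, Pi.single l 1)) with hd'
    set g₂ : κ → E →L[ℝ] ℝ := fun q => (g₁ q).comp (ContinuousLinearMap.inl ℝ E (Fin n → ℝ))
      with hg₂def
    obtain ⟨N, g', hfin⟩ := IH (ι := κ) d' g₂
    refine ⟨N, g', fun p => ?_⟩
    have hsplit : ∀ (q : κ) (u' : Fin n → ℝ),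
        g₁ q (p, u') = g₂ q p - ∑ l, u' l * d' q l := by
      intro q u'
      have h2 : ((0 : E), u') = ∑ l, u' l • (((0 : E), (Pi.single l (1:ℝ) : Fin n → ℝ)) : E × (Fin n → ℝ)) := by
        rw [Prod.ext_iff]
        constructor
        · rw [Prod.fst_sum]; simp
        · rw [Prod.snd_sum]
          simp only [Prod.smul_mk, smul_zero]
          funext j
          simp [Pi.single_apply, mul_ite, Finset.sum_ite_eq']
      have h1 : (p, u') = (p, (0 : Fin n → ℝ)) + (0, u') := by simp
      rw [h1, map_add, h2, map_sum]
      simp only [hd', hg₂def, ContinuousLinearMap.comp_apply, ContinuousLinearMap.inl_apply,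
        map_smul, smul_eq_mul, mul_neg, sub_neg_eq_add]
      rw [Finset.sum_neg_distrib, sub_neg_eq_add]
    constructor
    · rintro ⟨u, hu⟩
      have step1 : ∃ u' : Fin n → ℝ, ∃ t : ℝ, ∀ i, t * d i 0 ≤ hf i (p, u') := by
        refine ⟨fun l => u l.succ, u 0, fun i => ?_⟩
        rw [hfval]
        have := hu i
        rw [Fin.sum_univ_succ] at this
        linarith
      obtain ⟨u', ht⟩ := step1
      have := (hg₁ (p, u')).mp ht
      have : ∀ q, ∑ l, u' l * d' q l ≤ g₂ q p := by
        intro q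
        have h0 := this q
        rw [hsplit q u'] at h0
        linarith
      exact (hfin p).mp ⟨u', this⟩
    · intro H
      obtain ⟨u', hu'⟩ := (hfin p).mpr H
      have : ∀ q, 0 ≤ g₁ q (p, u') := by
        intro q
        rw [hsplit q u']
        have := hu' q
        linarith
      obtain ⟨t, ht⟩ := (hg₁ (p, u')).mpr this
      refine ⟨Fin.cons t u', fun i => ?_⟩
      rw [Fin.sum_univ_succ]
      have := ht i
      rw [hfval] at this
      simp only [Fin.cons_zero, Fin.cons_succ]
      linarith

/-- A continuous linear functional vanishing on a closed submodule and equal to 1 at a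
point outside it. -/
theorem exists_dual_annihilator {Z : Type*} [AddCommGroup Z] [Module ℝ Z]
    [TopologicalSpace Z] [IsTopologicalAddGroup Z] [ContinuousSMul ℝ Z]
    [LocallyConvexSpace ℝ Z]
    (N : Submodule ℝ Z) (hN : IsClosed (N : Set Z)) {ζ : Z} (hζ : ζ ∉ N) :
    ∃ ψ : Z →L[ℝ] ℝ, (∀ a ∈ N, ψ a = 0) ∧ ψ ζ = 1 := by
  obtain ⟨f, u, hfu, huζ⟩ := geometric_hahn_banach_closed_point
    (N.convex) hN hζ
  have hvanish : ∀ a ∈ N, f a = 0 := by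
    intro a ha
    by_contra hfa
    have : ((u + 1) / f a) • a ∈ N := N.smul_mem _ ha
    have h2 := hfu _ this
    rw [map_smul, smul_eq_mul, div_mul_cancel₀ _ hfa] at h2
    linarith
  have h0 : (0 : ℝ) < u := by
    have := hfu 0 N.zero_mem
    simpa using this
  have hfζ : f ζ ≠ 0 := by intro h; rw [h] at huζ; linarith
  refine ⟨(f ζ)⁻¹ • f, fun a ha => ?_, ?_⟩
  · simp [hvanish a ha]
  · simp [inv_mul_cancel₀ hfζ]

/-- If the graph of `F` is
`{(x,y) : A₁ x + A₂ y = z, ⟨xᵢ*,x⟩ + ⟨yᵢ*,y⟩ ≤ βᵢ}` and `A₁` maps every closed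
finite-codimensional subspace of `X` onto a closed set, then `rge F` is a
generalized polyhedral convex set. -/
theorem rge_is_gpc
    {X Y Z : Type*}
    [AddCommGroup X] [Module ℝ X] [TopologicalSpace X] [IsTopologicalAddGroup X]
    [ContinuousSMul ℝ X] [LocallyConvexSpace ℝ X] [T2Space X]
    [AddCommGroup Y] [Module ℝ Y] [TopologicalSpace Y] [IsTopologicalAddGroup Y]
    [ContinuousSMul ℝ Y] [LocallyConvexSpace ℝ Y] [T2Space Y]
    [AddCommGroup Z] [Module ℝ Z] [TopologicalSpace Z] [IsTopologicalAddGroup Z]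
    [ContinuousSMul ℝ Z] [LocallyConvexSpace ℝ Z] [T2Space Z]
    (A₁ : X →L[ℝ] Z) (A₂ : Y →L[ℝ] Z) (z : Z)
    {m : ℕ} (xs : Fin m → X →L[ℝ] ℝ) (ys : Fin m → Y →L[ℝ] ℝ) (β : Fin m → ℝ)
    (hA₁ : ∀ X₀ : Submodule ℝ X, IsClosed (X₀ : Set X) →
      FiniteDimensional ℝ (X ⧸ X₀) → IsClosed (A₁ '' (X₀ : Set X))) :
    IsGPC {y : Y | ∃ x : X, A₁ x + A₂ y = z ∧ ∀ i, xs i x + ys i y ≤ β i} := by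
  classical
  set f : X →L[ℝ] (Fin m → ℝ) := ContinuousLinearMap.pi xs with hfdef
  set X₀ : Submodule ℝ X := LinearMap.ker (f : X →ₗ[ℝ] (Fin m → ℝ)) with hX₀def
  have hXzero : ∀ x ∈ X₀, ∀ i, xs i x = 0 := by
    intro x hx i
    have : f x = 0 := LinearMap.mem_ker.mp hx
    have := congrFun this i
    simpa [hfdef] using this
  have hX₀fd : FiniteDimensional ℝ (X ⧸ X₀) := by
    have e := (LinearMap.quotKerEquivRange ((f : X →ₗ[ℝ] (Fin m → ℝ)))).symm
    have h1 : FiniteDimensional ℝ (X ⧸ LinearMap.ker ((f : X →ₗ[ℝ] (Fin m → ℝ)))) :=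
      e.finiteDimensional
    have h2 : LinearMap.ker ((f : X →ₗ[ℝ] (Fin m → ℝ))) = X₀ := by
      ext x; simp [hX₀def, LinearMap.mem_ker]
    rwa [h2] at h1
  -- Key lemma: A₁ maps any submodule containing X₀ onto a closed set
  have hkey : ∀ P : Submodule ℝ X, X₀ ≤ P →
      IsClosed ((P.map (A₁ : X →ₗ[ℝ] Z) : Set Z)) := by
    intro P hP
    have hPset : (P : Set X) = ⇑f ⁻¹' ((P.map (f : X →ₗ[ℝ] (Fin m → ℝ))) : Set (Fin m → ℝ)) := by
      ext x
      simp only [Set.mem_preimage, SetLike.mem_coe, Submodule.mem_map]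
      constructor
      · intro hx; exact ⟨x, hx, rfl⟩
      · rintro ⟨x', hx', hfx⟩
        have hker : x - x' ∈ X₀ := by
          have hfx' : f x' = f x := by
            simpa using hfx
          rw [hX₀def, LinearMap.mem_ker, map_sub, ContinuousLinearMap.coe_coe, hfx', sub_self]
        have : x = x' + (x - x') := by abel
        rw [this]
        exact P.add_mem hx' (hP hker)
    have hPclosed : IsClosed (P : Set X) := by
      rw [hPset]
      exact (Submodule.closed_of_finiteDimensional _).preimage f.continuous
    have hPfd : FiniteDimensional ℝ (X ⧸ P) := by
      have hle : X₀ ≤ P.comap (LinearMap.id : X →ₗ[ℝ] X) := hP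
      have hsurj : Function.Surjective (Submodule.mapQ X₀ P LinearMap.id hle) := by
        intro zq
        obtain ⟨x, rfl⟩ := Submodule.Quotient.mk_surjective P zq
        exact ⟨Submodule.Quotient.mk x, by simp [Submodule.mapQ_apply]⟩
      exact Module.Finite.of_surjective _ hsurj
    have := hA₁ P hPclosed hPfd
    simpa [Submodule.map_coe] using this
  -- generators of X mod X₀
  set M : Submodule ℝ Z := X₀.map (A₁ : X →ₗ[ℝ] Z) with hMdef
  obtain ⟨k, w, hw⟩ := Module.Finite.exists_fin (R := ℝ) (M := X ⧸ X₀)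
  have hvex : ∀ j, ∃ x : X, Submodule.Quotient.mk x = w j :=
    fun j => Submodule.Quotient.mk_surjective X₀ (w j)
  choose v hv using hvex
  have claimA : ∀ x : X, ∃ t : Fin k → ℝ, x - ∑ j, t j • v j ∈ X₀ := by
    intro x
    have hx : (Submodule.Quotient.mk x : X ⧸ X₀) ∈ Submodule.span ℝ (Set.range w) := by
      rw [hw]; trivial
    obtain ⟨t, ht⟩ := (Submodule.mem_span_range_iff_exists_fun ℝ).mp hx
    refine ⟨t, ?_⟩
    have hmk : (Submodule.Quotient.mk (∑ j, t j • v j) : X ⧸ X₀)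
        = Submodule.Quotient.mk x := by
      have : (Submodule.Quotient.mk (∑ j, t j • v j) : X ⧸ X₀)
          = ∑ j, t j • (Submodule.Quotient.mk (v j) : X ⧸ X₀) := by
        simp only [← Submodule.mkQ_apply, map_sum, map_smul]
      rw [this]
      simp only [hv]
      exact ht
    have := (Submodule.Quotient.eq X₀).mp hmk.symm
    exact this
  set b : Fin k → Z := fun j => A₁ (v j) with hbdef
  set spanv : Submodule ℝ X := Submodule.span ℝ (Set.range v) with hspanvdef
  set spanb : Submodule ℝ Z := Submodule.span ℝ (Set.range b) with hspanbdef
  have hspanb_map : spanb = spanv.map (A₁ : X →ₗ[ℝ] Z) := by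
    rw [hspanbdef, hspanvdef, Submodule.map_span]
    congr 1
    rw [← Set.range_comp]
    rfl
  set R : Submodule ℝ Z := M ⊔ spanb with hRdef
  have hRclosed : IsClosed (R : Set Z) := by
    have : R = (X₀ ⊔ spanv).map (A₁ : X →ₗ[ℝ] Z) := by
      rw [Submodule.map_sup, ← hspanb_map, hRdef, hMdef]
    rw [this]
    exact hkey _ le_sup_left
  -- complement of M ⊓ spanb inside spanb
  set Msb : Submodule ℝ Z := M ⊓ spanb with hMsbdef
  set p₀ : Submodule ℝ ↥spanb := Msb.comap spanb.subtype with hp₀def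
  obtain ⟨q₀, hq₀⟩ := Submodule.exists_isCompl p₀
  set V₁ : Submodule ℝ Z := q₀.map spanb.subtype with hV₁def
  have hV₁le : V₁ ≤ spanb := by
    rintro x hx
    rw [hV₁def] at hx
    obtain ⟨y, _, rfl⟩ := hx
    exact y.2
  have hMV₁ : ∀ x, x ∈ M → x ∈ V₁ → x = 0 := by
    intro x hxM hxV₁
    rw [hV₁def] at hxV₁
    obtain ⟨y, hy, rfl⟩ := hxV₁
    have hyp₀ : y ∈ p₀ := by
      rw [hp₀def, Submodule.mem_comap]
      exact ⟨hxM, y.2⟩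
    have : y ∈ p₀ ⊓ q₀ := ⟨hyp₀, hy⟩
    rw [hq₀.inf_eq_bot] at this
    rw [this]
    rfl
  have hMsble : Msb ≤ spanb := hMsbdef ▸ (inf_le_right : M ⊓ spanb ≤ spanb)
  have hMsbleM : Msb ≤ M := hMsbdef ▸ (inf_le_left : M ⊓ spanb ≤ M)
  have hMsup : M ⊔ V₁ = R := by
    have h1 : Msb ⊔ V₁ = spanb := by
      have h2 := congrArg (Submodule.map spanb.subtype) hq₀.sup_eq_top
      rw [Submodule.map_sup, Submodule.map_top, Submodule.range_subtype] at h2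
      have hmapp₀ : Submodule.map spanb.subtype p₀ = Msb := by
        rw [hp₀def, Submodule.map_comap_subtype]
        exact inf_eq_right.mpr hMsble
      rw [hmapp₀, ← hV₁def] at h2
      exact h2
    have h3 : M ⊔ Msb = M := sup_eq_left.mpr hMsbleM
    calc M ⊔ V₁ = (M ⊔ Msb) ⊔ V₁ := by rw [h3]
      _ = M ⊔ (Msb ⊔ V₁) := by rw [sup_assoc]
      _ = M ⊔ spanb := by rw [h1]
      _ = R := hRdef.symm
  haveI hspanbfd : FiniteDimensional ℝ ↥spanb := by
    rw [hspanbdef]; exact FiniteDimensional.span_of_finite ℝ (Set.finite_range b)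
  haveI hV₁fd : FiniteDimensional ℝ ↥V₁ := Submodule.finiteDimensional_of_le hV₁le
  set dd := Module.finrank ℝ ↥V₁ with hdd
  set ζbas : Module.Basis (Fin dd) ℝ ↥V₁ := Module.finBasis ℝ ↥V₁ with hζbas
  set ζ : Fin dd → Z := fun l => ↑(ζbas l) with hζdef
  have hζV₁ : ∀ l, ζ l ∈ V₁ := fun l => (ζbas l).2
  have hζli : LinearIndependent ℝ ζ := by
    have := ζbas.linearIndependent
    have h2 := this.map' V₁.subtype (Submodule.ker_subtype V₁)
    exact h2
  -- preimages of ζ in spanv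
  have hexu : ∀ l, ∃ u : X, u ∈ spanv ∧ A₁ u = ζ l := by
    intro l
    have h1 : ζ l ∈ spanb := hV₁le (hζV₁ l)
    rw [hspanb_map] at h1
    obtain ⟨u, hu, huA⟩ := h1
    exact ⟨u, hu, huA⟩
  choose uζ huζmem huζA using hexu
  -- annihilating functionals
  have hexψ : ∀ l : Fin dd, ∃ ψ : Z →L[ℝ] ℝ,
      (∀ a ∈ (M ⊔ Submodule.span ℝ (ζ '' {l}ᶜ) : Submodule ℝ Z), ψ a = 0) ∧ ψ (ζ l) = 1 := by
    intro l
    set Nl : Submodule ℝ Z := M ⊔ Submodule.span ℝ (ζ '' {l}ᶜ) with hNl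
    have hNlclosed : IsClosed (Nl : Set Z) := by
      have hNlmap : Nl = (X₀ ⊔ Submodule.span ℝ (uζ '' {l}ᶜ)).map (A₁ : X →ₗ[ℝ] Z) := by
        rw [Submodule.map_sup, ← hMdef, Submodule.map_span, hNl]
        congr 2
        rw [Set.image_image]
        exact Set.image_congr fun l' _ => (huζA l').symm
      rw [hNlmap]
      exact hkey _ le_sup_left
    have hζnotin : ζ l ∉ Nl := by
      intro hmem
      rw [hNl, Submodule.mem_sup] at hmem
      obtain ⟨mv, hmv, s, hs, hsum⟩ := hmem
      have hsV₁ : s ∈ V₁ := by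
        have : Submodule.span ℝ (ζ '' {l}ᶜ) ≤ V₁ := by
          rw [Submodule.span_le]
          rintro _ ⟨l', _, rfl⟩
          exact hζV₁ l'
        exact this hs
      have hmvV₁ : mv ∈ V₁ := by
        have : mv = ζ l - s := by rw [← hsum]; abel
        rw [this]
        exact V₁.sub_mem (hζV₁ l) hsV₁
      have hmv0 : mv = 0 := hMV₁ mv hmv hmvV₁
      have : ζ l ∈ Submodule.span ℝ (ζ '' {l}ᶜ) := by
        rw [← hsum, hmv0, zero_add]; exact hs
      exact hζli.notMem_span_image (by simp) this
    exact exists_dual_annihilator Nl hNlclosed hζnotin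
  choose ψ hψ0 hψ1 using hexψ
  have hψM : ∀ l, ∀ a ∈ M, ψ l a = 0 := by
    intro l a ha
    exact hψ0 l a (Submodule.mem_sup_left ha)
  have hψζ : ∀ l l', l' ≠ l → ψ l (ζ l') = 0 := by
    intro l l' hne
    refine hψ0 l _ (Submodule.mem_sup_right ?_)
    exact Submodule.subset_span ⟨l', by simpa using hne, rfl⟩
  -- decomposition lemma
  have hdec : ∀ ξ : Z, ξ ∈ R → (∀ l, ψ l ξ = 0) → ξ ∈ M := by
    intro ξ hξR hξψ
    rw [← hMsup, Submodule.mem_sup] at hξR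
    obtain ⟨mv, hmv, s, hs, hsum⟩ := hξR
    set s' : ↥V₁ := ⟨s, hs⟩ with hs'
    have hrepr : (s : Z) = ∑ l, (ζbas.repr s' l) • ζ l := by
      have h1 := ζbas.sum_repr s'
      have h2 := congrArg (Submodule.subtype V₁) h1
      rw [map_sum] at h2
      simp only [map_smul] at h2
      exact h2.symm
    have hcoef : ∀ l, ζbas.repr s' l = 0 := by
      intro l
      have h1 : ψ l ξ = ζbas.repr s' l := by
        rw [← hsum, map_add, hψM l mv hmv, zero_add, hrepr, map_sum]
        simp only [map_smul, smul_eq_mul]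
        rw [Finset.sum_eq_single l]
        · rw [hψ1 l, mul_one]
        · intro l' _ hne
          rw [hψζ l l' hne, mul_zero]
        · intro h; exact absurd (Finset.mem_univ l) h
      rw [← h1, hξψ l]
    have hs0 : s = 0 := by
      rw [hrepr]
      simp [hcoef]
    rw [← hsum, hs0, add_zero]
    exact hmv
  -- main equivalence
  have hstar : ∀ y : Y, (∃ x : X, A₁ x + A₂ y = z ∧ ∀ i, xs i x + ys i y ≤ β i) ↔
      ((z - A₂ y ∈ R) ∧ ∃ t : Fin k → ℝ,
        (∀ l, (∑ j, t j * ψ l (b j)) = ψ l (z - A₂ y)) ∧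
        (∀ i, (∑ j, t j * xs i (v j)) ≤ β i - ys i y)) := by
    intro y
    constructor
    · rintro ⟨x, hx, hineq⟩
      obtain ⟨t, hx₀⟩ := claimA x
      set x₀ : X := x - ∑ j, t j • v j with hx₀def
      have hAx : A₁ x = A₁ x₀ + ∑ j, t j • b j := by
        rw [hx₀def, map_sub, map_sum]
        simp only [map_smul, hbdef]
        abel
      have hzy : z - A₂ y = A₁ x := by rw [← hx]; abel
      have hA₁x₀M : A₁ x₀ ∈ M := ⟨x₀, hx₀, rfl⟩
      constructor
      · rw [hzy, hAx]
        refine R.add_mem (Submodule.mem_sup_left hA₁x₀M) (Submodule.mem_sup_right ?_)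
        exact Submodule.sum_smul_mem _ _ fun j _ => Submodule.subset_span ⟨j, rfl⟩
      · refine ⟨t, fun l => ?_, fun i => ?_⟩
        · rw [hzy, hAx, map_add, hψM l _ hA₁x₀M, zero_add, map_sum]
          simp only [map_smul, smul_eq_mul]
        · have hxs : xs i x = ∑ j, t j * xs i (v j) := by
            have h1 : x = x₀ + ∑ j, t j • v j := by rw [hx₀def]; abel
            rw [h1, map_add, hXzero x₀ hx₀ i, zero_add, map_sum]
            simp only [map_smul, smul_eq_mul]
          have := hineq i
          rw [hxs] at this
          linarith
    · rintro ⟨hmem, t, heq, hineq⟩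
      set ξ : Z := z - A₂ y - ∑ j, t j • b j with hξdef
      have hξR : ξ ∈ R := by
        refine R.sub_mem hmem (Submodule.mem_sup_right ?_)
        exact Submodule.sum_smul_mem _ _ fun j _ => Submodule.subset_span ⟨j, rfl⟩
      have hξψ : ∀ l, ψ l ξ = 0 := by
        intro l
        rw [hξdef, map_sub, map_sum]
        simp only [map_smul, smul_eq_mul]
        rw [← heq l]
        ring
      obtain ⟨x₀, hx₀mem, hx₀eq⟩ := hdec ξ hξR hξψ
      have hx₀eq' : A₁ x₀ = ξ := hx₀eq
      refine ⟨x₀ + ∑ j, t j • v j, ?_, ?_⟩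
      · have : A₁ (x₀ + ∑ j, t j • v j) = ξ + ∑ j, t j • b j := by
          rw [map_add, map_sum, hx₀eq']
          simp only [map_smul, hbdef]
        rw [this, hξdef]
        abel
      · intro i
        have hxs : xs i (x₀ + ∑ j, t j • v j) = ∑ j, t j * xs i (v j) := by
          rw [map_add, hXzero x₀ hx₀mem i, zero_add, map_sum]
          simp only [map_smul, smul_eq_mul]
        rw [hxs]
        have := hineq i
        linarith
  -- Fourier–Motzkin application
  set ι := (Fin m ⊕ (Fin dd ⊕ Fin dd)) with hι
  set drow : ι → Fin k → ℝ := Sum.elim (fun i j => xs i (v j))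
    (Sum.elim (fun l j => ψ l (b j)) (fun l j => -(ψ l (b j)))) with hdrow
  set sndYR : (Y × ℝ) →L[ℝ] ℝ := ContinuousLinearMap.snd ℝ Y ℝ with hsnd
  set fstYR : (Y × ℝ) →L[ℝ] Y := ContinuousLinearMap.fst ℝ Y ℝ with hfst
  set gfun : ι → (Y × ℝ) →L[ℝ] ℝ := Sum.elim
    (fun i => β i • sndYR - (ys i).comp fstYR)
    (Sum.elim (fun l => (ψ l z) • sndYR - ((ψ l).comp A₂).comp fstYR)
              (fun l => ((ψ l).comp A₂).comp fstYR - (ψ l z) • sndYR)) with hgfun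
  obtain ⟨NN, g', hfm⟩ := fm_full k (ι := ι) drow gfun
  -- bridge
  have hbridge : ∀ y : Y, (∃ t : Fin k → ℝ,
        (∀ l, (∑ j, t j * ψ l (b j)) = ψ l (z - A₂ y)) ∧
        (∀ i, (∑ j, t j * xs i (v j)) ≤ β i - ys i y)) ↔
      (∃ t : Fin k → ℝ, ∀ i : ι, (∑ j, t j * drow i j) ≤ gfun i (y, 1)) := by
    intro y
    constructor
    · rintro ⟨t, heq, hineq⟩
      refine ⟨t, fun i => ?_⟩
      rcases i with i | l | l
      · simpa [hdrow, hgfun, hsnd, hfst] using hineq i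
      · have : (∑ j, t j * ψ l (b j)) = ψ l (z - A₂ y) := heq l
        simp only [hdrow, hgfun, hsnd, hfst, Sum.elim_inr, Sum.elim_inl,
          ContinuousLinearMap.sub_apply, ContinuousLinearMap.smul_apply,
          ContinuousLinearMap.comp_apply, ContinuousLinearMap.coe_fst',
          ContinuousLinearMap.coe_snd', smul_eq_mul, mul_one]
        rw [this, map_sub]
      · have : (∑ j, t j * ψ l (b j)) = ψ l (z - A₂ y) := heq l
        simp only [hdrow, hgfun, hsnd, hfst, Sum.elim_inr,
          ContinuousLinearMap.sub_apply, ContinuousLinearMap.smul_apply,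
          ContinuousLinearMap.comp_apply, ContinuousLinearMap.coe_fst',
          ContinuousLinearMap.coe_snd', smul_eq_mul, mul_one, mul_neg,
          Finset.sum_neg_distrib]
        rw [this, map_sub]
        ring_nf
        exact le_refl _
    · rintro ⟨t, ht⟩
      refine ⟨t, fun l => ?_, fun i => ?_⟩
      · have h1 := ht (Sum.inr (Sum.inl l))
        have h2 := ht (Sum.inr (Sum.inr l))
        simp only [hdrow, hgfun, hsnd, hfst, Sum.elim_inr, Sum.elim_inl,
          ContinuousLinearMap.sub_apply, ContinuousLinearMap.smul_apply,
          ContinuousLinearMap.comp_apply, ContinuousLinearMap.coe_fst',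
          ContinuousLinearMap.coe_snd', smul_eq_mul, mul_one, mul_neg,
          Finset.sum_neg_distrib] at h1 h2
        rw [map_sub]
        have := neg_le_neg h2
        linarith
      · have h1 := ht (Sum.inl i)
        simpa [hdrow, hgfun, hsnd, hfst] using h1
  -- final assembly
  set Tmap : Y →ᵃ[ℝ] Z :=
    { toFun := fun y => z - A₂ y
      linear := -(A₂ : Y →ₗ[ℝ] Z)
      map_vadd' := by
        intro p v'
        simp only [vadd_eq_add, map_add, LinearMap.neg_apply, ContinuousLinearMap.coe_coe]
        abel } with hTmap
  set L : AffineSubspace ℝ Y := AffineSubspace.comap Tmap R.toAffineSubspace with hL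
  have hLmem : ∀ y : Y, y ∈ L ↔ z - A₂ y ∈ R := by
    intro y
    rw [hL, AffineSubspace.mem_comap]
    rw [Submodule.mem_toAffineSubspace]
    rfl
  have hLclosed : IsClosed (L : Set Y) := by
    rw [hL, AffineSubspace.coe_comap]
    have hcont : Continuous Tmap := by
      show Continuous fun y => z - A₂ y
      exact continuous_const.sub A₂.continuous
    have : (R.toAffineSubspace : Set Z) = (R : Set Z) := rfl
    rw [this]
    exact hRclosed.preimage hcont
  refine ⟨NN, fun q => -((g' q).comp (ContinuousLinearMap.inl ℝ Y ℝ)), fun q => g' q (0, 1),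
    L, hLclosed, ?_⟩
  ext y
  simp only [Set.mem_setOf_eq]
  rw [hstar y, hbridge y, hfm (y, 1), hLmem y]
  have hsplit : ∀ q, g' q (y, 1) = g' q (y, 0) + g' q (0, 1) := by
    intro q
    rw [← map_add]
    norm_num
  constructor
  · rintro ⟨h1, h2⟩
    refine ⟨h1, fun q => ?_⟩
    have := h2 q
    rw [hsplit q] at this
    simp only [ContinuousLinearMap.neg_apply, ContinuousLinearMap.comp_apply,
      ContinuousLinearMap.inl_apply]
    linarith
  · rintro ⟨h1, h2⟩
    refine ⟨h1, fun q => ?_⟩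
    have := h2 q
    simp only [ContinuousLinearMap.neg_apply, ContinuousLinearMap.comp_apply,
      ContinuousLinearMap.inl_apply] at this
    rw [hsplit q]
    linarith
end

section
/- Let X, Y be locally convex Hausdorff topological vector spaces and F : X ⇒ Y a polyhedral convex multifunction, i.e., gph F = {(x,y) : ⟨x_i*, x⟩ + ⟨y_i*, y⟩ ≤ β_i, i = 1,…,m} for some x_i* ∈ X*, y_i* ∈ Y*, β_i ∈ ℝ. Then dom F is a polyhedral convex set in X and rge F is a polyhedral convex set in Y. -/
/-- A set is polyhedral convex if it is a finite intersection of half-spaces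
given by continuous linear functionals. -/
def IsPolyhedralConvex {E : Type*} [AddCommGroup E] [Module ℝ E] [TopologicalSpace E]
    (D : Set E) : Prop :=
  ∃ (n : ℕ) (f : Fin n → E →L[ℝ] ℝ) (α : Fin n → ℝ),
    D = {x | ∀ i, f i x ≤ α i}

lemma polyOfFintype {E : Type*} [AddCommGroup E] [Module ℝ E] [TopologicalSpace E]
    {ι : Type*} [Fintype ι] (f : ι → E →L[ℝ] ℝ) (α : ι → ℝ) :
    IsPolyhedralConvex {x : E | ∀ i, f i x ≤ α i} := by
  classical
  refine ⟨Fintype.card ι, f ∘ (Fintype.equivFin ι).symm, α ∘ (Fintype.equivFin ι).symm, ?_⟩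
  ext x
  simp only [Set.mem_setOf_eq, Function.comp]
  exact ⟨fun h i => h _, fun h i => by simpa using h (Fintype.equivFin ι i)⟩

lemma fm_one {E : Type*} [AddCommGroup E] [Module ℝ E] [TopologicalSpace E]
    (n : ℕ) (f : Fin n → E →L[ℝ] ℝ) (c : Fin n → ℝ) (α : Fin n → ℝ) :
    IsPolyhedralConvex {x : E | ∃ s : ℝ, ∀ i, f i x + c i * s ≤ α i} := by
  classical
  set g : Fin n ⊕ (Fin n × Fin n) → E →L[ℝ] ℝ := fun i =>
    match i with
    | .inl i => if c i = 0 then f i else 0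
    | .inr (i, j) => if 0 < c i ∧ c j < 0 then c i • f j - c j • f i else 0 with hg
  set β : Fin n ⊕ (Fin n × Fin n) → ℝ := fun i =>
    match i with
    | .inl i => if c i = 0 then α i else 0
    | .inr (i, j) => if 0 < c i ∧ c j < 0 then c i * α j - c j * α i else 0 with hβ
  have key : {x : E | ∃ s : ℝ, ∀ i, f i x + c i * s ≤ α i} = {x : E | ∀ i, g i x ≤ β i} := by
    ext x
    simp only [Set.mem_setOf_eq]
    constructor
    · rintro ⟨s, hs⟩ i
      match i with
      | .inl i =>
        simp only [hg, hβ]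
        by_cases h : c i = 0
        · simp only [if_pos h]
          have := hs i; rw [h] at this; linarith
        · simp [if_neg h]
      | .inr (i, j) =>
        simp only [hg, hβ]
        by_cases h : 0 < c i ∧ c j < 0
        · simp only [if_pos h, ContinuousLinearMap.sub_apply, ContinuousLinearMap.smul_apply,
            smul_eq_mul]
          have hi := hs i; have hj := hs j
          nlinarith [mul_le_mul_of_nonneg_left hi (by linarith [h.2] : (0:ℝ) ≤ -c j),
            mul_le_mul_of_nonneg_left hj (le_of_lt h.1)]
        · simp [if_neg h]
    · intro hx
      set P : Finset (Fin n) := Finset.univ.filter (fun i => 0 < c i) with hP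
      set N : Finset (Fin n) := Finset.univ.filter (fun j => c j < 0) with hN
      set u : Fin n → ℝ := fun i => (α i - f i x) / c i with hu
      set L : Fin n → ℝ := fun j => (f j x - α j) / (-c j) with hL
      have pairLU : ∀ i ∈ P, ∀ j ∈ N, L j ≤ u i := by
        intro i hi j hj
        rw [hP, Finset.mem_filter] at hi
        rw [hN, Finset.mem_filter] at hj
        have hc := hx (.inr (i, j))
        have hcond : 0 < c i ∧ c j < 0 := ⟨hi.2, hj.2⟩
        simp only [hg, hβ, if_pos hcond, ContinuousLinearMap.sub_apply,
          ContinuousLinearMap.smul_apply, smul_eq_mul] at hc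
        rw [hL, hu, div_le_div_iff₀ (by linarith [hj.2]) hi.2]
        nlinarith [hc]
      refine ⟨if hNn : N.Nonempty then N.sup' hNn L else if hPn : P.Nonempty then P.inf' hPn u else 0, ?_⟩
      intro i
      rcases lt_trichotomy (c i) 0 with hneg | hzero | hpos
      · -- i ∈ N; need f i x + c i * s ≤ α i with s ≥ L i
        have hiN : i ∈ N := by rw [hN, Finset.mem_filter]; exact ⟨Finset.mem_univ _, hneg⟩
        have hNn : N.Nonempty := ⟨i, hiN⟩
        rw [dif_pos hNn]
        have hs : L i ≤ N.sup' hNn L := Finset.le_sup' L hiN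
        have hLi : c i * L i = α i - f i x := by
          have hne : c i ≠ 0 := ne_of_lt hneg
          have h2 := mul_div_cancel₀ (f i x - α i) (neg_ne_zero.mpr hne)
          rw [hL]
          linear_combination -h2
        have := mul_le_mul_of_nonpos_left hs (le_of_lt hneg)
        linarith [hLi ▸ this]
      · have hc := hx (.inl i)
        simp only [hg, hβ, if_pos hzero] at hc
        rw [hzero]; linarith
      · have hiP : i ∈ P := by rw [hP, Finset.mem_filter]; exact ⟨Finset.mem_univ _, hpos⟩
        have hPn : P.Nonempty := ⟨i, hiP⟩
        have hkey : ∀ s, s ≤ u i → f i x + c i * s ≤ α i := by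
          intro s hsu
          have := mul_le_mul_of_nonneg_left hsu (le_of_lt hpos)
          have hui : c i * u i = α i - f i x := by
            rw [hu]
            have hne : c i ≠ 0 := ne_of_gt hpos
            field_simp
          linarith [hui ▸ this]
        by_cases hNn : N.Nonempty
        · rw [dif_pos hNn]
          exact hkey _ (Finset.sup'_le hNn L (fun j hj => pairLU i hiP j hj))
        · rw [dif_neg hNn, dif_pos hPn]
          exact hkey _ (Finset.inf'_le u hiP)
  rw [key]
  exact polyOfFintype g β

lemma fm_multi (k : ℕ) {E : Type*} [AddCommGroup E] [Module ℝ E] [TopologicalSpace E]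
    (n : ℕ) (f : Fin n → E →L[ℝ] ℝ) (c : Fin n → Fin k → ℝ) (α : Fin n → ℝ) :
    IsPolyhedralConvex {x : E | ∃ t : Fin k → ℝ, ∀ i, f i x + ∑ j, c i j * t j ≤ α i} := by
  induction k generalizing n with
  | zero =>
    have : {x : E | ∃ t : Fin 0 → ℝ, ∀ i, f i x + ∑ j, c i j * t j ≤ α i}
        = {x : E | ∀ i, f i x ≤ α i} := by
      ext x
      simp only [Set.mem_setOf_eq, Finset.univ_eq_empty, Finset.sum_empty, add_zero]
      exact ⟨fun ⟨_, h⟩ => h, fun h => ⟨finZeroElim, h⟩⟩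
    rw [this]
    exact polyOfFintype f α
  | succ k ih =>
    -- eliminate the last variable on E × (Fin k → ℝ)
    set F : Fin n → (E × (Fin k → ℝ)) →L[ℝ] ℝ := fun i =>
      (f i).comp (ContinuousLinearMap.fst ℝ E (Fin k → ℝ)) +
        ∑ j : Fin k, c i j.castSucc •
          ((ContinuousLinearMap.proj j).comp (ContinuousLinearMap.snd ℝ E (Fin k → ℝ))) with hF
    have hFapp : ∀ i x (t' : Fin k → ℝ), F i (x, t') = f i x + ∑ j, c i j.castSucc * t' j := by
      intro i x t'
      simp [hF, ContinuousLinearMap.sum_apply]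
    obtain ⟨n', f', β', hB⟩ := fm_one n F (fun i => c i (Fin.last k)) α
    have key : {x : E | ∃ t : Fin (k+1) → ℝ, ∀ i, f i x + ∑ j, c i j * t j ≤ α i}
        = {x : E | ∃ t' : Fin k → ℝ, ∀ i',
            (f' i').comp (ContinuousLinearMap.inl ℝ E (Fin k → ℝ)) x
              + ∑ j, f' i' (0, Pi.single j 1) * t' j ≤ β' i'} := by
      have hsplit : ∀ (i' : Fin n') (x : E) (t' : Fin k → ℝ),
          f' i' (x, t') = (f' i').comp (ContinuousLinearMap.inl ℝ E (Fin k → ℝ)) x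
            + ∑ j, f' i' (0, Pi.single j 1) * t' j := by
        intro i' x t'
        have h2 : t' = ∑ j, t' j • (Pi.single j 1 : Fin k → ℝ) := by
          conv_lhs => rw [← Finset.univ_sum_single t']
          refine Finset.sum_congr rfl fun j _ => ?_
          rw [← Pi.single_smul, smul_eq_mul, mul_one]
        have h1 : ((x, t') : E × (Fin k → ℝ))
            = (x, 0) + ∑ j, t' j • ((0, Pi.single j 1) : E × (Fin k → ℝ)) := by
          rw [Prod.ext_iff]
          refine ⟨by simp [Prod.fst_sum], ?_⟩
          simp only [Prod.snd_add, Prod.snd_sum, Prod.smul_snd]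
          rw [← h2]; simp
        rw [h1, map_add, map_sum]
        rw [ContinuousLinearMap.comp_apply, ContinuousLinearMap.inl_apply]
        congr 1
        exact Finset.sum_congr rfl fun j _ => by rw [map_smul, smul_eq_mul, mul_comm]
      ext x
      simp only [Set.mem_setOf_eq]
      constructor
      · rintro ⟨t, ht⟩
        refine ⟨Fin.init t, fun i' => ?_⟩
        rw [← hsplit]
        have hx : ((x, Fin.init t) : E × (Fin k → ℝ)) ∈ {p : E × (Fin k → ℝ) |
            ∃ s : ℝ, ∀ i, F i p + c i (Fin.last k) * s ≤ α i} := by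
          refine ⟨t (Fin.last k), fun i => ?_⟩
          rw [hFapp]
          have := ht i
          rw [Fin.sum_univ_castSucc] at this
          simpa [Fin.init, add_assoc] using this
        rw [hB] at hx
        exact hx i'
      · rintro ⟨t', ht'⟩
        have hx : ((x, t') : E × (Fin k → ℝ)) ∈ {p : E × (Fin k → ℝ) |
            ∃ s : ℝ, ∀ i, F i p + c i (Fin.last k) * s ≤ α i} := by
          rw [hB]
          intro i'
          rw [hsplit]
          exact ht' i'
        obtain ⟨s, hs⟩ := hx
        refine ⟨Fin.snoc t' s, fun i => ?_⟩
        rw [Fin.sum_univ_castSucc]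
        have := hs i
        rw [hFapp] at this
        simpa [Fin.snoc, add_assoc] using this
    rw [key]
    exact ih n' (fun i' => (f' i').comp (ContinuousLinearMap.inl ℝ E (Fin k → ℝ)))
      (fun i' j => f' i' (0, Pi.single j 1)) β'

lemma fm_multi' {ι : Type*} [Fintype ι] {E : Type*} [AddCommGroup E] [Module ℝ E]
    [TopologicalSpace E] (n : ℕ) (f : Fin n → E →L[ℝ] ℝ) (c : Fin n → ι → ℝ) (α : Fin n → ℝ) :
    IsPolyhedralConvex {x : E | ∃ t : ι → ℝ, ∀ i, f i x + ∑ j, c i j * t j ≤ α i} := by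
  classical
  have h := fm_multi (Fintype.card ι) n f (fun i j => c i ((Fintype.equivFin ι).symm j)) α
  have : {x : E | ∃ t : ι → ℝ, ∀ i, f i x + ∑ j, c i j * t j ≤ α i}
      = {x : E | ∃ t : Fin (Fintype.card ι) → ℝ, ∀ i,
          f i x + ∑ j, c i ((Fintype.equivFin ι).symm j) * t j ≤ α i} := by
    ext x
    simp only [Set.mem_setOf_eq]
    constructor
    · rintro ⟨t, ht⟩
      refine ⟨t ∘ (Fintype.equivFin ι).symm, fun i => ?_⟩
      have hsum : ∑ j, c i ((Fintype.equivFin ι).symm j) * (t ∘ (Fintype.equivFin ι).symm) j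
          = ∑ j, c i j * t j :=
        Fintype.sum_equiv (Fintype.equivFin ι).symm _ _ (fun j => rfl)
      rw [hsum]
      exact ht i
    · rintro ⟨t, ht⟩
      refine ⟨t ∘ (Fintype.equivFin ι), fun i => ?_⟩
      have hsum : ∑ j, c i ((Fintype.equivFin ι).symm j) * t j
          = ∑ j, c i j * t ((Fintype.equivFin ι) j) :=
        (Fintype.sum_equiv (Fintype.equivFin ι) _ _ (fun j => by simp)).symm
      have := ht i
      rw [hsum] at this
      simpa using this
  rw [this]
  exact h

lemma dom_poly {X Y : Type*}
    [AddCommGroup X] [Module ℝ X] [TopologicalSpace X]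
    [AddCommGroup Y] [Module ℝ Y] [TopologicalSpace Y]
    (G : Set (X × Y)) (hG : IsPolyhedralConvex G) :
    IsPolyhedralConvex {x : X | ∃ y : Y, (x, y) ∈ G} := by
  classical
  obtain ⟨m, f, α, hα⟩ := hG
  set a : Fin m → X →L[ℝ] ℝ := fun i => (f i).comp (ContinuousLinearMap.inl ℝ X Y) with ha
  set T : Y →ₗ[ℝ] (Fin m → ℝ) :=
    LinearMap.pi (fun i => ((f i).comp (ContinuousLinearMap.inr ℝ X Y) : Y →ₗ[ℝ] ℝ)) with hT
  have hsplit : ∀ (i : Fin m) (x : X) (y : Y), f i (x, y) = a i x + T y i := by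
    intro i x y
    have : ((x, y) : X × Y) = (x, 0) + (0, y) := by simp
    rw [this, map_add]
    rfl
  set p : Submodule ℝ (Fin m → ℝ) := LinearMap.range T with hp
  obtain ⟨S, hS⟩ : p.FG := IsNoetherian.noetherian p
  have hmemS : ∀ j : S, (j : Fin m → ℝ) ∈ p := by
    intro j
    rw [← hS]
    exact Submodule.subset_span j.2
  choose ys hys using fun j : S => (hmemS j)
  have hspan : ∀ w : Fin m → ℝ, w ∈ p ↔ ∃ t : S → ℝ, ∑ j : S, t j • (j : Fin m → ℝ) = w := by
    intro w
    rw [← hS, show ((S : Set (Fin m → ℝ))) = Set.range (fun j : S => (j : Fin m → ℝ)) by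
      simp [Subtype.range_coe]]
    exact Submodule.mem_span_range_iff_exists_fun ℝ
  have key : {x : X | ∃ y : Y, (x, y) ∈ G}
      = {x : X | ∃ t : S → ℝ, ∀ i, a i x + ∑ j : S, (j : Fin m → ℝ) i * t j ≤ α i} := by
    ext x
    simp only [Set.mem_setOf_eq, hα]
    constructor
    · rintro ⟨y, hy⟩
      obtain ⟨t, htw⟩ := (hspan (T y)).mp (LinearMap.mem_range_self T y)
      refine ⟨t, fun i => ?_⟩
      have h1 : ∑ j : S, (j : Fin m → ℝ) i * t j = T y i := by
        rw [← htw]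
        simp [Finset.sum_apply, mul_comm]
      rw [h1, ← hsplit]
      exact hy i
    · rintro ⟨t, ht⟩
      refine ⟨∑ j : S, t j • ys j, fun i => ?_⟩
      rw [hsplit]
      have h1 : T (∑ j : S, t j • ys j) i = ∑ j : S, (j : Fin m → ℝ) i * t j := by
        rw [map_sum]
        simp only [map_smul]
        simp [Finset.sum_apply, hys, mul_comm]
      rw [h1]
      exact ht i
  rw [key]
  exact fm_multi' m a (fun i (j : S) => (j : Fin m → ℝ) i) α

/-- If `F : X ⇒ Y` is a polyhedral convex multifunction, then
`dom F` and `rge F` are polyhedral convex sets. -/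
theorem dom_rge_polyhedral
    {X Y : Type*}
    [AddCommGroup X] [Module ℝ X] [TopologicalSpace X] [IsTopologicalAddGroup X]
    [ContinuousSMul ℝ X] [LocallyConvexSpace ℝ X] [T2Space X]
    [AddCommGroup Y] [Module ℝ Y] [TopologicalSpace Y] [IsTopologicalAddGroup Y]
    [ContinuousSMul ℝ Y] [LocallyConvexSpace ℝ Y] [T2Space Y]
    (G : Set (X × Y)) (hG : IsPolyhedralConvex G) :
    IsPolyhedralConvex {x : X | ∃ y : Y, (x, y) ∈ G} ∧ IsPolyhedralConvex {y : Y | ∃ x : X, (x, y) ∈ G} := by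
  refine ⟨dom_poly G hG, ?_⟩
  obtain ⟨m, f, α, hα⟩ := hG
  set sw : (Y × X) →L[ℝ] (X × Y) :=
    (ContinuousLinearMap.snd ℝ Y X).prod (ContinuousLinearMap.fst ℝ Y X) with hsw
  have hG' : IsPolyhedralConvex {q : Y × X | (q.2, q.1) ∈ G} := by
    refine ⟨m, fun i => (f i).comp sw, α, ?_⟩
    ext q
    simp [hα, hsw]
  exact dom_poly _ hG'
end

section
/- Let X, Y be locally convex Hausdorff topological vector spaces. If P ⊆ X × Y is a polyhedral convex set, then its projection π_X(P) onto X is a polyhedral convex set in X and its projection π_Y(P) onto Y is a polyhedral convex set in Y. -/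
open Finset
-- FM core lemma
lemma fm_core {ι : Type*} [Fintype ι] (a c : ι → ℝ) :
    (∃ s : ℝ, ∀ i, a i * s ≤ c i) ↔
      ((∀ i, a i = 0 → 0 ≤ c i) ∧
        ∀ i j, 0 < a i → a j < 0 → c j / a j ≤ c i / a i) := by
  constructor
  · rintro ⟨s, hs⟩
    refine ⟨fun i hi => by have := hs i; rw [hi] at this; linarith, fun i j hi hj => ?_⟩
    have h1 : s ≤ c i / a i := (le_div_iff₀ hi).mpr (by have := hs i; linarith [hs i, mul_comm (a i) s])
    have h2 : c j / a j ≤ s := by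
      rw [div_le_iff_of_neg hj]
      have := hs j; linarith [mul_comm (a j) s]
    linarith
  · rintro ⟨h0, hp⟩
    classical
    set Neg := univ.filter (fun i => a i < 0) with hNeg
    by_cases hN : Neg.Nonempty
    · refine ⟨Neg.sup' hN (fun j => c j / a j), fun i => ?_⟩
      rcases lt_trichotomy (a i) 0 with h | h | h
      · have hmem : i ∈ Neg := by simp [hNeg, h]
        have hle : c i / a i ≤ Neg.sup' hN (fun j => c j / a j) := Finset.le_sup' (fun j => c j / a j) hmem
        have := mul_le_mul_of_nonpos_left hle (le_of_lt h)
        rw [mul_div_cancel₀ _ (ne_of_lt h)] at this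
        linarith
      · rw [h]; simpa using h0 i h
      · have hle : Neg.sup' hN (fun j => c j / a j) ≤ c i / a i := by
          apply Finset.sup'_le
          intro j hj
          exact hp i j h (by simpa [hNeg] using hj)
        have := mul_le_mul_of_nonneg_left hle (le_of_lt h)
        rw [mul_div_cancel₀ _ (ne_of_gt h)] at this
        linarith
    · set Pos := univ.filter (fun i => 0 < a i) with hPos
      by_cases hQ : Pos.Nonempty
      · refine ⟨Pos.inf' hQ (fun i => c i / a i), fun i => ?_⟩
        rcases lt_trichotomy (a i) 0 with h | h | h
        · exact absurd ⟨i, by simp [hNeg, h]⟩ hN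
        · rw [h]; simpa using h0 i h
        · have hle : Pos.inf' hQ (fun j => c j / a j) ≤ c i / a i :=
            Finset.inf'_le _ (by simp [hPos, h])
          have := mul_le_mul_of_nonneg_left hle (le_of_lt h)
          rw [mul_div_cancel₀ _ (ne_of_gt h)] at this
          linarith
      · refine ⟨0, fun i => ?_⟩
        rcases lt_trichotomy (a i) 0 with h | h | h
        · exact absurd ⟨i, by simp [hNeg, h]⟩ hN
        · rw [h]; simpa using h0 i h
        · exact absurd ⟨i, by simp [hPos, h]⟩ hQ

lemma polyhedral_of_fintype {E : Type*} [AddCommGroup E] [Module ℝ E] [TopologicalSpace E]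
    {ι : Type*} [Fintype ι] (f : ι → E →L[ℝ] ℝ) (α : ι → ℝ) :
    IsPolyhedralConvex {x | ∀ i, f i x ≤ α i} := by
  classical
  let e := Fintype.equivFin ι
  refine ⟨Fintype.card ι, fun j => f (e.symm j), fun j => α (e.symm j), ?_⟩
  ext x
  simp only [Set.mem_setOf_eq]
  exact ⟨fun h j => h _, fun h i => by simpa using h (e i)⟩

lemma fm_elim {E : Type*} [AddCommGroup E] [Module ℝ E] [TopologicalSpace E] :
    ∀ (d : ℕ) {ι : Type} [Fintype ι] (g : ι → E →L[ℝ] ℝ) (a : ι → Fin d → ℝ) (α : ι → ℝ),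
      IsPolyhedralConvex {x | ∃ t : Fin d → ℝ, ∀ i, g i x + ∑ k, a i k * t k ≤ α i} := by
  intro d
  induction d with
  | zero =>
    intro ι _ g a α
    have h : {x | ∃ t : Fin 0 → ℝ, ∀ i, g i x + ∑ k, a i k * t k ≤ α i}
        = {x : E | ∀ i, g i x ≤ α i} := by
      ext x; simp
    rw [h]; exact polyhedral_of_fintype g α
  | succ d ih =>
    intro ι _ g a α
    classical
    set g' : ι ⊕ ι × ι → E →L[ℝ] ℝ := Sum.elim
      (fun i => if a i 0 = 0 then g i else 0)
      (fun p => if 0 < a p.1 0 ∧ a p.2 0 < 0 then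
        (a p.1 0)⁻¹ • g p.1 - (a p.2 0)⁻¹ • g p.2 else 0) with hg'
    set a' : ι ⊕ ι × ι → Fin d → ℝ := Sum.elim
      (fun i k => if a i 0 = 0 then a i k.succ else 0)
      (fun p k => if 0 < a p.1 0 ∧ a p.2 0 < 0 then
        (a p.1 0)⁻¹ * a p.1 k.succ - (a p.2 0)⁻¹ * a p.2 k.succ else 0) with ha'
    set α' : ι ⊕ ι × ι → ℝ := Sum.elim
      (fun i => if a i 0 = 0 then α i else 0)
      (fun p => if 0 < a p.1 0 ∧ a p.2 0 < 0 then
        α p.1 / a p.1 0 - α p.2 / a p.2 0 else 0) with hα'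
    have key : {x | ∃ t : Fin (d+1) → ℝ, ∀ i, g i x + ∑ k, a i k * t k ≤ α i}
        = {x | ∃ t : Fin d → ℝ, ∀ p, g' p x + ∑ k, a' p k * t k ≤ α' p} := by
      ext x
      simp only [Set.mem_setOf_eq]
      constructor
      · rintro ⟨t, ht⟩
        -- produce t' := tail, then verify new constraints
        refine ⟨fun k => t k.succ, ?_⟩
        intro p
        match p with
        | Sum.inl i =>
          by_cases h0 : a i 0 = 0
          · have := ht i
            rw [Fin.sum_univ_succ, h0] at this
            simp only [hg', ha', hα', Sum.elim_inl, if_pos h0]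
            linarith
          · simp [hg', ha', hα', if_neg h0]
        | Sum.inr p =>
          obtain ⟨i, j⟩ := p
          by_cases hc : 0 < a i 0 ∧ a j 0 < 0
          · obtain ⟨hi, hj⟩ := hc
            have hti := ht i
            have htj := ht j
            rw [Fin.sum_univ_succ] at hti htj
            simp only [hg', ha', hα', Sum.elim_inr, if_pos (⟨hi, hj⟩ : 0 < a i 0 ∧ a j 0 < 0)]
            have hSi : ∑ k : Fin d, ((a i 0)⁻¹ * a i k.succ - (a j 0)⁻¹ * a j k.succ) * t k.succ
                = (a i 0)⁻¹ * (∑ k : Fin d, a i k.succ * t k.succ)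
                  - (a j 0)⁻¹ * (∑ k : Fin d, a j k.succ * t k.succ) := by
              rw [Finset.mul_sum, Finset.mul_sum, ← Finset.sum_sub_distrib]
              exact Finset.sum_congr rfl (fun k _ => by ring)
            simp only [ContinuousLinearMap.sub_apply, ContinuousLinearMap.smul_apply,
              smul_eq_mul]
            rw [hSi]
            set Si := ∑ k : Fin d, a i k.succ * t k.succ
            set Sj := ∑ k : Fin d, a j k.succ * t k.succ
            -- from hti: g i x + (a i 0 * t 0 + Si) ≤ α i
            have e1 : (a i 0)⁻¹ * (g i x) + (a i 0)⁻¹ * Si + t 0 ≤ (a i 0)⁻¹ * α i := by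
              have := mul_le_mul_of_nonneg_left hti (le_of_lt (inv_pos.mpr hi))
              have hc : (a i 0)⁻¹ * (a i 0) = 1 := inv_mul_cancel₀ (ne_of_gt hi)
              rw [mul_add, mul_add, ← mul_assoc, hc, one_mul] at this
              linarith
            have e2 : (a j 0)⁻¹ * α j ≤ (a j 0)⁻¹ * (g j x) + (a j 0)⁻¹ * Sj + t 0 := by
              have := mul_le_mul_of_nonpos_left htj (le_of_lt (inv_lt_zero.mpr hj))
              have hc : (a j 0)⁻¹ * (a j 0) = 1 := inv_mul_cancel₀ (ne_of_lt hj)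
              rw [mul_add, mul_add, ← mul_assoc, hc, one_mul] at this
              linarith
            rw [div_eq_inv_mul, div_eq_inv_mul]
            linarith
          · simp [hg', ha', hα', if_neg hc]
      · rintro ⟨t', hp⟩
        -- use fm_core to find s
        have hcore : ∃ s : ℝ, ∀ i, a i 0 * s ≤ α i - g i x - ∑ k, a i k.succ * t' k := by
          rw [fm_core]
          constructor
          · intro i hi
            have := hp (Sum.inl i)
            simp only [hg', ha', hα', Sum.elim_inl, if_pos hi] at this
            linarith
          · intro i j hi hj
            have := hp (Sum.inr (i, j))
            simp only [hg', ha', hα', Sum.elim_inr,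
              if_pos (⟨hi, hj⟩ : 0 < a i 0 ∧ a j 0 < 0)] at this
            have hSi : ∑ k : Fin d, ((a i 0)⁻¹ * a i k.succ - (a j 0)⁻¹ * a j k.succ) * t' k
                = (a i 0)⁻¹ * (∑ k : Fin d, a i k.succ * t' k)
                  - (a j 0)⁻¹ * (∑ k : Fin d, a j k.succ * t' k) := by
              rw [Finset.mul_sum, Finset.mul_sum, ← Finset.sum_sub_distrib]
              exact Finset.sum_congr rfl (fun k _ => by ring)
            simp only [ContinuousLinearMap.sub_apply, ContinuousLinearMap.smul_apply,
              smul_eq_mul] at this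
            rw [hSi] at this
            set Si := ∑ k : Fin d, a i k.succ * t' k
            set Sj := ∑ k : Fin d, a j k.succ * t' k
            rw [div_eq_inv_mul, div_eq_inv_mul] at this ⊢
            have expandi : (a i 0)⁻¹ * (α i - g i x - Si)
                = (a i 0)⁻¹ * α i - (a i 0)⁻¹ * (g i x) - (a i 0)⁻¹ * Si := by ring
            have expandj : (a j 0)⁻¹ * (α j - g j x - Sj)
                = (a j 0)⁻¹ * α j - (a j 0)⁻¹ * (g j x) - (a j 0)⁻¹ * Sj := by ring
            rw [expandi, expandj]
            linarith
        obtain ⟨s, hs⟩ := hcore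
        refine ⟨Fin.cons s t', fun i => ?_⟩
        rw [Fin.sum_univ_succ]
        simp only [Fin.cons_zero, Fin.cons_succ]
        have := hs i
        linarith
    rw [key]
    exact ih g' a' α'

lemma proj_aux {E F : Type*} [AddCommGroup E] [Module ℝ E] [TopologicalSpace E]
    [AddCommGroup F] [Module ℝ F] [TopologicalSpace F]
    (n : ℕ) (g : Fin n → E →L[ℝ] ℝ) (h : Fin n → F →L[ℝ] ℝ) (α : Fin n → ℝ) :
    IsPolyhedralConvex {x | ∃ y : F, ∀ i, g i x + h i y ≤ α i} := by
  classical
  set T : F →ₗ[ℝ] (Fin n → ℝ) := LinearMap.pi (fun i => (h i : F →ₗ[ℝ] ℝ)) with hT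
  set V : Submodule ℝ (Fin n → ℝ) := LinearMap.range T with hV
  haveI : FiniteDimensional ℝ V := inferInstance
  set d := Module.finrank ℝ V with hd
  set b : Module.Basis (Fin d) ℝ V := Module.finBasis ℝ V with hb
  have hset : {x | ∃ y : F, ∀ i, g i x + h i y ≤ α i}
      = {x | ∃ t : Fin d → ℝ, ∀ i, g i x + ∑ k, (b k : Fin n → ℝ) i * t k ≤ α i} := by
    ext x
    simp only [Set.mem_setOf_eq]
    constructor
    · rintro ⟨y, hy⟩
      have hzV : T y ∈ V := LinearMap.mem_range_self T y
      set z : V := ⟨T y, hzV⟩ with hz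
      refine ⟨fun k => b.repr z k, fun i => ?_⟩
      have hrepr : (z : Fin n → ℝ) = ∑ k, b.repr z k • (b k : Fin n → ℝ) := by
        conv_lhs => rw [← b.sum_repr z]
        push_cast
        rfl
      have hzi : h i y = ∑ k, (b k : Fin n → ℝ) i * b.repr z k := by
        have : (z : Fin n → ℝ) i = ∑ k, b.repr z k * (b k : Fin n → ℝ) i := by
          rw [hrepr]
          simp [Finset.sum_apply]
        have hz' : (z : Fin n → ℝ) i = h i y := rfl
        rw [hz'] at this
        rw [this]
        exact Finset.sum_congr rfl (fun k _ => mul_comm _ _)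
      rw [← hzi]
      exact hy i
    · rintro ⟨t, ht⟩
      have hzV : (∑ k, t k • (b k : Fin n → ℝ)) ∈ V :=
        Submodule.sum_mem V (fun k _ => Submodule.smul_mem V _ (b k).2)
      obtain ⟨y, hy⟩ := hzV
      refine ⟨y, fun i => ?_⟩
      have : h i y = ∑ k, (b k : Fin n → ℝ) i * t k := by
        have : T y i = (∑ k, t k • (b k : Fin n → ℝ)) i := by rw [hy]
        simp only [Finset.sum_apply, Pi.smul_apply, smul_eq_mul] at this
        have hTy : T y i = h i y := rfl
        rw [hTy] at this
        rw [this]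
        exact Finset.sum_congr rfl (fun k _ => mul_comm _ _)
      rw [this]
      exact ht i
  rw [hset]
  exact fm_elim d g (fun i k => (b k : Fin n → ℝ) i) α

/-- Coordinate projections of a polyhedral convex subset of
`X × Y` are polyhedral convex. -/
theorem proj_polyhedral
    {X Y : Type*}
    [AddCommGroup X] [Module ℝ X] [TopologicalSpace X] [IsTopologicalAddGroup X]
    [ContinuousSMul ℝ X] [LocallyConvexSpace ℝ X] [T2Space X]
    [AddCommGroup Y] [Module ℝ Y] [TopologicalSpace Y] [IsTopologicalAddGroup Y]
    [ContinuousSMul ℝ Y] [LocallyConvexSpace ℝ Y] [T2Space Y]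
    (P : Set (X × Y)) (hP : IsPolyhedralConvex P) :
    IsPolyhedralConvex (Prod.fst '' P) ∧ IsPolyhedralConvex (Prod.snd '' P) := by
  obtain ⟨n, f, α, rfl⟩ := hP
  have hsplit : ∀ (i : Fin n) (x : X) (y : Y),
      f i (x, y) = (f i).comp (ContinuousLinearMap.inl ℝ X Y) x
        + (f i).comp (ContinuousLinearMap.inr ℝ X Y) y := by
    intro i x y
    simp only [ContinuousLinearMap.comp_apply, ContinuousLinearMap.inl_apply,
      ContinuousLinearMap.inr_apply]
    rw [← map_add]
    congr 1
    simp [Prod.mk_add_mk]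
  constructor
  · have h1 : Prod.fst '' {p : X × Y | ∀ i, f i p ≤ α i}
        = {x | ∃ y : Y, ∀ i, (f i).comp (ContinuousLinearMap.inl ℝ X Y) x
            + (f i).comp (ContinuousLinearMap.inr ℝ X Y) y ≤ α i} := by
      ext x
      constructor
      · rintro ⟨⟨x', y⟩, hp, rfl⟩
        exact ⟨y, fun i => by rw [← hsplit]; exact hp i⟩
      · rintro ⟨y, hy⟩
        exact ⟨(x, y), fun i => by rw [hsplit]; exact hy i, rfl⟩
    rw [h1]
    exact proj_aux n _ _ α
  · have h2 : Prod.snd '' {p : X × Y | ∀ i, f i p ≤ α i}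
        = {y | ∃ x : X, ∀ i, (f i).comp (ContinuousLinearMap.inr ℝ X Y) y
            + (f i).comp (ContinuousLinearMap.inl ℝ X Y) x ≤ α i} := by
      ext y
      constructor
      · rintro ⟨⟨x, y'⟩, hp, rfl⟩
        exact ⟨x, fun i => by rw [add_comm, ← hsplit]; exact hp i⟩
      · rintro ⟨x, hx⟩
        exact ⟨(x, y), fun i => by rw [hsplit, add_comm]; exact hx i, rfl⟩
    rw [h2]
    exact proj_aux n _ _ α
end

section
/- Let X, Y be locally convex Hausdorff topological vector spaces, F : X ⇒ Y a polyhedral convex multifunction, and D ⊆ Y a generalized polyhedral convex set. Then the inverse image F⁻¹(D) = {x ∈ X : F(x) ∩ D ≠ ∅} is a polyhedral convex set in X. -/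
section Helpers

variable {E F' : Type*} [AddCommGroup E] [Module ℝ E] [TopologicalSpace E]
  [AddCommGroup F'] [Module ℝ F'] [TopologicalSpace F']

/-- reindexing through any fintype -/
lemma isPolyhedralConvex_of_fintype (ι : Type*) [Fintype ι]
    (f : ι → E →L[ℝ] ℝ) (α : ι → ℝ) :
    IsPolyhedralConvex {x : E | ∀ i, f i x ≤ α i} := by
  refine ⟨Fintype.card ι, fun k => f ((Fintype.equivFin ι).symm k),
    fun k => α ((Fintype.equivFin ι).symm k), ?_⟩
  ext x
  simp only [Set.mem_setOf_eq]
  constructor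
  · intro hx k; exact hx _
  · intro hx i; simpa using hx (Fintype.equivFin ι i)

lemma IsPolyhedralConvex.preimage (φ : E →L[ℝ] F') {G : Set F'}
    (hG : IsPolyhedralConvex G) : IsPolyhedralConvex (φ ⁻¹' G) := by
  obtain ⟨n, f, α, rfl⟩ := hG
  exact ⟨n, fun i => (f i).comp φ, α, by ext x; simp⟩

/-- Fourier–Motzkin elimination of one real variable. -/
lemma poly_proj_real {G : Set (E × ℝ)} (hG : IsPolyhedralConvex G) :
    IsPolyhedralConvex {x : E | ∃ t : ℝ, (x, t) ∈ G} := by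
  obtain ⟨n, F, α, rfl⟩ := hG
  set f : Fin n → E →L[ℝ] ℝ := fun i => (F i).comp (ContinuousLinearMap.inl ℝ E ℝ) with hf
  set c : Fin n → ℝ := fun i => F i (0, 1) with hc
  have hF : ∀ (i) (x : E) (t : ℝ), F i (x, t) = f i x + c i * t := by
    intro i x t
    have hxt : (x, t) = (x, (0:ℝ)) + t • ((0:E), (1:ℝ)) := by
      simp [Prod.ext_iff]
    rw [hxt, map_add, map_smul]
    simp [hf, hc, mul_comm]
  classical
  let ι := Fin n ⊕ (Fin n × Fin n)
  let f' : ι → E →L[ℝ] ℝ := fun k =>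
    match k with
    | Sum.inl i => if c i = 0 then f i else 0
    | Sum.inr (i, j) => if 0 < c i ∧ c j < 0 then c i • f j - c j • f i else 0
  let α' : ι → ℝ := fun k =>
    match k with
    | Sum.inl i => if c i = 0 then α i else 0
    | Sum.inr (i, j) => if 0 < c i ∧ c j < 0 then c i * α j - c j * α i else 0
  have key : {x : E | ∃ t : ℝ, (x, t) ∈ {p : E × ℝ | ∀ i, F i p ≤ α i}}
      = {x : E | ∀ k, f' k x ≤ α' k} := by
    ext x
    simp only [Set.mem_setOf_eq]
    constructor
    · rintro ⟨t, ht⟩ k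
      have ht' : ∀ i, f i x + c i * t ≤ α i := fun i => by rw [← hF]; exact ht i
      match k with
      | Sum.inl i =>
        by_cases h0 : c i = 0
        · have := ht' i
          rw [h0] at this
          simp only [f', α', h0, if_true]
          linarith
        · simp [f', α', h0]
      | Sum.inr (i, j) =>
        by_cases hij : 0 < c i ∧ c j < 0
        · have hi := hij.1
          have hj := hij.2
          have h1 := ht' i
          have h2 := ht' j
          simp only [f', α', hij, and_self, if_true, hi, hj, ContinuousLinearMap.sub_apply,
            ContinuousLinearMap.smul_apply, smul_eq_mul]
          nlinarith [mul_le_mul_of_nonneg_left h1 (by linarith : (0:ℝ) ≤ -c j),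
            mul_le_mul_of_nonneg_left h2 (le_of_lt hi)]
        · simp [f', α', hij]
    · intro hx
      have hzero : ∀ i, c i = 0 → f i x ≤ α i := by
        intro i h0
        have := hx (Sum.inl i)
        simpa [f', α', h0] using this
      have hpair : ∀ i j, 0 < c i → c j < 0 →
          c i * f j x - c j * f i x ≤ c i * α j - c j * α i := by
        intro i j hi hj
        have := hx (Sum.inr (i, j))
        simp only [f', α', hi, hj, and_self, if_true, ContinuousLinearMap.sub_apply,
          ContinuousLinearMap.smul_apply, smul_eq_mul] at this
        linarith
      set Pos : Finset (Fin n) := Finset.univ.filter (fun i => 0 < c i) with hPos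
      set Neg : Finset (Fin n) := Finset.univ.filter (fun i => c i < 0) with hNeg
      by_cases hP : Pos.Nonempty
      · refine ⟨Pos.inf' hP (fun i => (α i - f i x) / c i), ?_⟩
        intro i
        rw [hF]
        set t := Pos.inf' hP (fun i => (α i - f i x) / c i) with htdef
        rcases lt_trichotomy (c i) 0 with h1 | h1 | h1
        · obtain ⟨i₀, hi₀mem, hi₀⟩ := Finset.exists_mem_eq_inf' hP (fun i => (α i - f i x) / c i)
          have hc₀ : 0 < c i₀ := (Finset.mem_filter.1 hi₀mem).2
          have hp := hpair i₀ i hc₀ h1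
          have h2 : c i₀ * t = α i₀ - f i₀ x := by
            rw [htdef, hi₀]
            field_simp
          nlinarith [mul_pos hc₀ hc₀]
        · have := hzero i h1
          rw [h1]
          linarith
        · have hmem : i ∈ Pos := Finset.mem_filter.2 ⟨Finset.mem_univ _, h1⟩
          have hle : t ≤ (α i - f i x) / c i := Finset.inf'_le _ hmem
          have := (le_div_iff₀ h1).1 hle
          linarith
      · have hnopos : ∀ i, c i ≤ 0 := by
          intro i
          by_contra h'
          push_neg at h'
          exact hP ⟨i, Finset.mem_filter.2 ⟨Finset.mem_univ _, h'⟩⟩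
        by_cases hN : Neg.Nonempty
        · refine ⟨Neg.sup' hN (fun j => (α j - f j x) / c j), ?_⟩
          intro i
          rw [hF]
          set t := Neg.sup' hN (fun j => (α j - f j x) / c j) with htdef
          rcases lt_or_eq_of_le (hnopos i) with h1 | h1
          · have hmem : i ∈ Neg := Finset.mem_filter.2 ⟨Finset.mem_univ _, h1⟩
            have hle : (α i - f i x) / c i ≤ t := Finset.le_sup' (fun j => (α j - f j x) / c j) hmem
            have h3 : c i * t ≤ c i * ((α i - f i x) / c i) :=
              mul_le_mul_of_nonpos_left hle (le_of_lt h1)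
            rw [mul_div_cancel₀ _ (ne_of_lt h1)] at h3
            linarith
          · have := hzero i h1
            rw [h1]
            linarith
        · refine ⟨0, ?_⟩
          intro i
          rw [hF]
          have h0 : c i = 0 := by
            rcases lt_or_eq_of_le (hnopos i) with h1 | h1
            · exact absurd ⟨i, Finset.mem_filter.2 ⟨Finset.mem_univ _, h1⟩⟩ hN
            · exact h1
          have := hzero i h0
          rw [h0]
          linarith
  rw [key]
  exact isPolyhedralConvex_of_fintype ι f' α'

end Helpers

section Pi

variable {E : Type*} [AddCommGroup E] [Module ℝ E] [TopologicalSpace E]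

/-- the continuous linear map gluing `Fin.cons`. -/
noncomputable def consCLM (k : ℕ) :
    ((E × (Fin k → ℝ)) × ℝ) →L[ℝ] (E × (Fin (k+1) → ℝ)) where
  toLinearMap :=
    { toFun := fun p => (p.1.1, Fin.cons p.2 p.1.2)
      map_add' := by
        intro p q
        refine Prod.ext rfl ?_
        funext i
        induction i using Fin.cases with
        | zero => simp
        | succ j => simp
      map_smul' := by
        intro r p
        refine Prod.ext rfl ?_
        funext i
        induction i using Fin.cases with
        | zero => simp
        | succ j => simp }
  cont := by
    refine Continuous.prodMk (continuous_fst.fst) (continuous_pi ?_)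
    intro i
    induction i using Fin.cases with
    | zero => simpa using continuous_snd
    | succ j =>
      simpa [Function.comp_def] using (continuous_apply j).comp (continuous_fst.snd)

lemma poly_proj_pi : ∀ (k : ℕ) (G : Set (E × (Fin k → ℝ))), IsPolyhedralConvex G →
    IsPolyhedralConvex {x : E | ∃ u : Fin k → ℝ, (x, u) ∈ G} := by
  intro k
  induction k with
  | zero =>
    intro G hG
    have h1 := hG.preimage ((ContinuousLinearMap.id ℝ E).prod (0 : E →L[ℝ] (Fin 0 → ℝ)))
    have hset : {x : E | ∃ u : Fin 0 → ℝ, (x, u) ∈ G}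
        = ((ContinuousLinearMap.id ℝ E).prod (0 : E →L[ℝ] (Fin 0 → ℝ))) ⁻¹' G := by
      ext x
      simp only [Set.mem_setOf_eq, Set.mem_preimage]
      constructor
      · rintro ⟨u, hu⟩
        have : ((ContinuousLinearMap.id ℝ E).prod (0 : E →L[ℝ] (Fin 0 → ℝ))) x = (x, u) := by
          simp [Prod.ext_iff]
          exact (Subsingleton.elim _ _)
        rw [this]; exact hu
      · intro hx
        exact ⟨0, by simpa [Prod.ext_iff] using hx⟩
    rw [hset]; exact h1
  | succ k ih =>
    intro G hG
    have h1 := hG.preimage (consCLM (E := E) k)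
    have h2 := poly_proj_real h1
    have h3 := ih _ h2
    have hset : {x : E | ∃ u : Fin (k+1) → ℝ, (x, u) ∈ G}
        = {x : E | ∃ u : Fin k → ℝ, (x, u) ∈
            {p : E × (Fin k → ℝ) | ∃ t : ℝ, (p, t) ∈ consCLM (E := E) k ⁻¹' G}} := by
      ext x
      simp only [Set.mem_setOf_eq, Set.mem_preimage]
      constructor
      · rintro ⟨u, hu⟩
        refine ⟨Fin.tail u, u 0, ?_⟩
        have : consCLM (E := E) k ((x, Fin.tail u), u 0) = (x, u) := by
          simp only [consCLM, ContinuousLinearMap.coe_mk', LinearMap.coe_mk, AddHom.coe_mk]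
          rw [Fin.cons_self_tail]
        rw [this]; exact hu
      · rintro ⟨u, t, hu⟩
        exact ⟨Fin.cons t u, hu⟩
    rw [hset]; exact h3

lemma poly_proj_two (n m : ℕ) (G : Set (E × ((Fin n → ℝ) × (Fin m → ℝ))))
    (hG : IsPolyhedralConvex G) :
    IsPolyhedralConvex {x : E | ∃ z : (Fin n → ℝ) × (Fin m → ℝ), (x, z) ∈ G} := by
  let A := ContinuousLinearMap.fst ℝ (E × (Fin n → ℝ)) (Fin m → ℝ)
  let ψ : ((E × (Fin n → ℝ)) × (Fin m → ℝ)) →L[ℝ] (E × ((Fin n → ℝ) × (Fin m → ℝ))) :=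
    ((ContinuousLinearMap.fst ℝ E (Fin n → ℝ)).comp A).prod
      (((ContinuousLinearMap.snd ℝ E (Fin n → ℝ)).comp A).prod
        (ContinuousLinearMap.snd ℝ (E × (Fin n → ℝ)) (Fin m → ℝ)))
  have hψ : ∀ (x : E) (u : Fin n → ℝ) (v : Fin m → ℝ), ψ ((x, u), v) = (x, (u, v)) := by
    intro x u v; rfl
  have h1 := hG.preimage ψ
  have h2 := poly_proj_pi (E := E × (Fin n → ℝ)) m _ h1
  have h3 := poly_proj_pi (E := E) n _ h2
  have hset : {x : E | ∃ z : (Fin n → ℝ) × (Fin m → ℝ), (x, z) ∈ G}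
      = {x : E | ∃ u : Fin n → ℝ, (x, u) ∈
          {p : E × (Fin n → ℝ) | ∃ v : Fin m → ℝ, (p, v) ∈ ψ ⁻¹' G}} := by
    ext x
    simp only [Set.mem_setOf_eq, Set.mem_preimage]
    constructor
    · rintro ⟨⟨u, v⟩, hz⟩
      exact ⟨u, v, by rw [hψ]; exact hz⟩
    · rintro ⟨u, v, hz⟩
      rw [hψ] at hz
      exact ⟨(u, v), hz⟩
  rw [hset]; exact h3

end Pi
/-- The inverse image of a generalized polyhedral convex set
under a polyhedral convex multifunction is polyhedral convex. -/
theorem preimage_of_gpc_under_polyhedral_multifunction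
    {X Y : Type*}
    [AddCommGroup X] [Module ℝ X] [TopologicalSpace X] [IsTopologicalAddGroup X]
    [ContinuousSMul ℝ X] [LocallyConvexSpace ℝ X] [T2Space X]
    [AddCommGroup Y] [Module ℝ Y] [TopologicalSpace Y] [IsTopologicalAddGroup Y]
    [ContinuousSMul ℝ Y] [LocallyConvexSpace ℝ Y] [T2Space Y]
    (G : Set (X × Y)) (hG : IsPolyhedralConvex G)
    (D : Set Y) (hD : IsGPC D) :
    IsPolyhedralConvex {x : X | ∃ y ∈ D, (x, y) ∈ G} := by
  classical
  obtain ⟨n, F, α, hGeq⟩ := hG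
  obtain ⟨m, g, β, L, hLcl, hDeq⟩ := hD
  by_cases hL : (L : Set Y).Nonempty
  · obtain ⟨p, hp⟩ := hL
    let a : Fin n → X →L[ℝ] ℝ := fun i => (F i).comp (ContinuousLinearMap.inl ℝ X Y)
    let b : Fin n → Y →L[ℝ] ℝ := fun i => (F i).comp (ContinuousLinearMap.inr ℝ X Y)
    have hFi : ∀ (i) (x : X) (y : Y), F i (x, y) = a i x + b i y := by
      intro i x y
      have hxy : (x, y) = (x, (0:Y)) + ((0:X), y) := by simp
      rw [hxy, map_add]
      rfl
    let V := (Fin n → ℝ) × (Fin m → ℝ)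
    let T : Y →ₗ[ℝ] V :=
      LinearMap.prod (LinearMap.pi fun i => (b i : Y →ₗ[ℝ] ℝ))
        (LinearMap.pi fun j => (g j : Y →ₗ[ℝ] ℝ))
    have hT1 : ∀ (y : Y) (i : Fin n), (T y).1 i = b i y := fun y i => rfl
    have hT2 : ∀ (y : Y) (j : Fin m), (T y).2 j = g j y := fun y j => rfl
    let M : AffineSubspace ℝ V := L.map T.toAffineMap
    let W : Submodule ℝ V := M.direction
    let bas := Module.finBasis ℝ (V ⧸ W)
    let dd := Module.finrank ℝ (V ⧸ W)
    let h : Fin dd → V →ₗ[ℝ] ℝ := fun k => (bas.coord k).comp W.mkQ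
    have hz0 : T p ∈ M := AffineSubspace.mem_map.2 ⟨p, hp, rfl⟩
    have hMmem : ∀ z : V, z ∈ M ↔ ∀ k, h k z = h k (T p) := by
      intro z
      constructor
      · intro hz k
        have hd : z - T p ∈ W := by
          simpa [vsub_eq_sub] using AffineSubspace.vsub_mem_direction hz hz0
        have hq : W.mkQ (z - T p) = 0 := (Submodule.Quotient.mk_eq_zero W).2 hd
        have h2 : W.mkQ z = W.mkQ (T p) := by
          rwa [map_sub, sub_eq_zero] at hq
        simp only [h, LinearMap.comp_apply, h2]
      · intro hk
        have hq : W.mkQ (z - T p) = 0 := by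
          have hrepr : bas.repr (W.mkQ (z - T p)) = 0 := by
            ext k
            have := hk k
            simp only [h, LinearMap.comp_apply, Module.Basis.coord_apply] at this
            simp only [map_sub, Finsupp.sub_apply, Finsupp.coe_zero, Pi.zero_apply]
            rw [this, sub_self]
          exact bas.repr.map_eq_zero_iff.1 hrepr
        have hd : z - T p ∈ W := (Submodule.Quotient.mk_eq_zero W).1 hq
        have := AffineSubspace.vadd_mem_of_mem_direction hd hz0
        simpa [vadd_eq_add, sub_add_cancel] using this
    let projV : (X × V) →L[ℝ] V := ContinuousLinearMap.snd ℝ X V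
    let hc : Fin dd → V →L[ℝ] ℝ := fun k => LinearMap.toContinuousLinearMap (h k)
    let ι := (Fin n ⊕ Fin m) ⊕ (Fin dd ⊕ Fin dd)
    let f' : ι → (X × V) →L[ℝ] ℝ := fun k =>
      match k with
      | Sum.inl (Sum.inl i) => (a i).comp (ContinuousLinearMap.fst ℝ X V) +
          (ContinuousLinearMap.proj i).comp
            ((ContinuousLinearMap.fst ℝ (Fin n → ℝ) (Fin m → ℝ)).comp projV)
      | Sum.inl (Sum.inr j) => (ContinuousLinearMap.proj j).comp
          ((ContinuousLinearMap.snd ℝ (Fin n → ℝ) (Fin m → ℝ)).comp projV)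
      | Sum.inr (Sum.inl k) => (hc k).comp projV
      | Sum.inr (Sum.inr k) => -((hc k).comp projV)
    let α' : ι → ℝ := fun k =>
      match k with
      | Sum.inl (Sum.inl i) => α i
      | Sum.inl (Sum.inr j) => β j
      | Sum.inr (Sum.inl k) => h k (T p)
      | Sum.inr (Sum.inr k) => -(h k (T p))
    have harm1 : ∀ (i : Fin n) (q : X × V), f' (Sum.inl (Sum.inl i)) q = a i q.1 + q.2.1 i := by
      intro i q
      simp [f', projV]
    have harm2 : ∀ (j : Fin m) (q : X × V), f' (Sum.inl (Sum.inr j)) q = q.2.2 j := by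
      intro j q
      simp [f', projV]
    have harm3 : ∀ (k : Fin dd) (q : X × V), f' (Sum.inr (Sum.inl k)) q = h k q.2 := by
      intro k q
      have h0 : f' (Sum.inr (Sum.inl k)) q = hc k q.2 := rfl
      rw [h0]
      simp [hc]
    have harm4 : ∀ (k : Fin dd) (q : X × V), f' (Sum.inr (Sum.inr k)) q = -(h k q.2) := by
      intro k q
      have h0 : f' (Sum.inr (Sum.inr k)) q = -(hc k q.2) := rfl
      rw [h0]
      simp [hc]
    have hP : IsPolyhedralConvex {q : X × V | ∀ k, f' k q ≤ α' k} :=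
      isPolyhedralConvex_of_fintype ι f' α'
    have hproj := poly_proj_two (E := X) n m _ hP
    have hset : {x : X | ∃ y ∈ D, (x, y) ∈ G}
        = {x : X | ∃ z : (Fin n → ℝ) × (Fin m → ℝ), (x, z) ∈
            {q : X × V | ∀ k, f' k q ≤ α' k}} := by
      ext x
      simp only [Set.mem_setOf_eq]
      constructor
      · rintro ⟨y, hyD, hyG⟩
        rw [hDeq] at hyD
        obtain ⟨hyL, hyg⟩ := hyD
        rw [hGeq] at hyG
        have hTy : ∀ k, h k (T y) = h k (T p) :=
          (hMmem (T y)).1 (AffineSubspace.mem_map.2 ⟨y, hyL, rfl⟩)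
        refine ⟨T y, ?_⟩
        intro k
        match k with
        | Sum.inl (Sum.inl i) =>
          have hthis := hyG i
          rw [hFi] at hthis
          rw [harm1]
          show a i x + (T y).1 i ≤ α i
          rw [hT1]
          exact hthis
        | Sum.inl (Sum.inr j) =>
          rw [harm2]
          show (T y).2 j ≤ β j
          rw [hT2]
          exact hyg j
        | Sum.inr (Sum.inl k) =>
          rw [harm3]
          exact le_of_eq (hTy k)
        | Sum.inr (Sum.inr k) =>
          rw [harm4]
          exact le_of_eq (by rw [hTy k])
      · rintro ⟨z, hz⟩
        have h1 : ∀ i, a i x + z.1 i ≤ α i := by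
          intro i
          have hthis := hz (Sum.inl (Sum.inl i))
          rwa [harm1] at hthis
        have h2 : ∀ j, z.2 j ≤ β j := by
          intro j
          have hthis := hz (Sum.inl (Sum.inr j))
          rwa [harm2] at hthis
        have h3 : ∀ k, h k z = h k (T p) := by
          intro k
          have ha := hz (Sum.inr (Sum.inl k))
          have hb := hz (Sum.inr (Sum.inr k))
          rw [harm3] at ha
          rw [harm4] at hb
          have hb' : h k (T p) ≤ h k z := by
            have : -(h k z) ≤ -(h k (T p)) := hb
            linarith
          exact le_antisymm ha hb'
        obtain ⟨y, hyL, hTy⟩ := AffineSubspace.mem_map.1 ((hMmem z).2 h3)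
        have hTy' : T y = z := hTy
        refine ⟨y, ?_, ?_⟩
        · rw [hDeq]
          refine ⟨hyL, fun j => ?_⟩
          have := h2 j
          rw [← hTy'] at this
          rwa [hT2] at this
        · rw [hGeq]
          intro i
          rw [hFi]
          have := h1 i
          rw [← hTy'] at this
          rwa [hT1] at this
    rw [hset]
    exact hproj
  · have hDempty : D = ∅ := by
      rw [hDeq]
      ext y
      simp only [Set.mem_setOf_eq, Set.mem_empty_iff_false, iff_false, not_and]
      intro hyL
      exact absurd ⟨y, hyL⟩ hL
    refine ⟨1, fun _ => 0, fun _ => -1, ?_⟩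
    ext x
    simp [hDempty]
end

section
/- Let X and Y be Fréchet spaces and T : X → Y a continuous linear map. Then T maps every finite-codimensional closed linear subspace of X to a closed subset of Y if and only if T(X) is closed in Y. -/
open Filter Set Topology
open scoped Uniformity Pointwise

section OMT

variable {X Y : Type*}
  [AddCommGroup X] [Module ℝ X] [UniformSpace X] [IsUniformAddGroup X]
  [ContinuousSMul ℝ X] [FirstCountableTopology X] [CompleteSpace X]
  [AddCommGroup Y] [Module ℝ Y] [UniformSpace Y] [IsUniformAddGroup Y]
  [ContinuousSMul ℝ Y] [FirstCountableTopology Y] [CompleteSpace Y] [T2Space Y]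

/-- Baire-category half of the open mapping theorem. -/
theorem frechet_omt_step1 (T : X →L[ℝ] Y) (hsurj : Function.Surjective T)
    {U : Set X} (hU : U ∈ 𝓝 0) : closure (T '' U) ∈ 𝓝 (0 : Y) := by
  haveI : (𝓤 Y).IsCountablyGenerated := IsUniformAddGroup.uniformity_countably_generated
  obtain ⟨V₀, hV₀, hV₀U⟩ := exists_nhds_zero_half hU
  set V : Set X := V₀ ∩ (-V₀) with hVdef
  have hV : V ∈ 𝓝 (0 : X) := by
    refine Filter.inter_mem hV₀ ?_
    simpa using neg_mem_nhds_zero X hV₀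
  have hVU : ∀ a ∈ V, ∀ b ∈ V, a - b ∈ U := by
    intro a ha b hb
    rw [sub_eq_add_neg]
    exact hV₀U a ha.1 (-b) hb.2
  set C : Set Y := closure (T '' V) with hC
  have hcover : (⋃ n : ℕ, ((n : ℝ) + 1) • C) = univ := by
    refine eq_univ_iff_forall.2 fun y => ?_
    obtain ⟨x, rfl⟩ := hsurj y
    obtain ⟨r, -, hr⟩ := (absorbent_nhds_zero (𝕜 := ℝ) hV x).exists_pos
    obtain ⟨n, hn⟩ := exists_nat_ge r
    have hx : x ∈ ((n : ℝ) + 1) • V :=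
      hr ((n : ℝ) + 1) (by rw [Real.norm_of_nonneg (by positivity)]; linarith)
        (mem_singleton x)
    obtain ⟨v, hv, rfl⟩ := hx
    refine mem_iUnion.2 ⟨n, ?_⟩
    rw [map_smul]
    exact smul_mem_smul_set (subset_closure (mem_image_of_mem T hv))
  have hclosed : ∀ n : ℕ, IsClosed (((n : ℝ) + 1) • C) := fun n =>
    isClosed_closure.smul_of_ne_zero (by positivity)
  obtain ⟨n, y₀, hy₀⟩ := nonempty_interior_of_iUnion_of_closed hclosed hcover
  have hCint : (interior C).Nonempty := by
    have hne : ((n : ℝ) + 1) ≠ 0 := by positivity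
    rw [interior_smul₀ hne] at hy₀
    obtain ⟨w, hw, -⟩ := hy₀
    exact ⟨w, hw⟩
  obtain ⟨z, hz⟩ := hCint
  have hzC : z ∈ C := interior_subset hz
  have hsub : interior C - {z} ⊆ closure (T '' U) := by
    rintro _ ⟨w, hw, z', hz', rfl⟩
    rw [mem_singleton_iff] at hz'
    subst hz'
    have hwC : w ∈ C := interior_subset hw
    refine map_mem_closure₂ continuous_sub hwC hzC ?_
    rintro a ⟨va, hva, rfl⟩ b ⟨vb, hvb, rfl⟩
    exact ⟨va - vb, hVU va hva vb hvb, by simp⟩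
  have hopen : IsOpen (interior C - {z}) := isOpen_interior.sub_right
  have h0 : (0 : Y) ∈ interior C - {z} := by
    simpa using sub_mem_sub hz (mem_singleton z)
  exact mem_nhds_iff.2 ⟨interior C - {z}, hsub, hopen, h0⟩

set_option linter.unusedSectionVars false in
/-- Open mapping theorem for Fréchet spaces: image of a neighborhood of zero. -/
theorem frechet_omt_step2 (T : X →L[ℝ] Y) (hsurj : Function.Surjective T)
    {U : Set X} (hU : U ∈ 𝓝 0) : T '' U ∈ 𝓝 (0 : Y) := by
  classical
  -- a closed neighborhood inside U
  obtain ⟨W, hWmem, hWU, hWclosed⟩ : ∃ W ∈ 𝓝 (0 : X), W ⊆ U ∧ IsClosed W := by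
    rcases (closed_nhds_basis (0 : X)).mem_iff.mp hU with ⟨W, ⟨hW1, hW2⟩, hW3⟩
    exact ⟨W, hW1, hW3, hW2⟩
  -- symmetric antitone basis with u (n+1) + u (n+1) ⊆ u n
  obtain ⟨u₀, hu₀, hu₀add⟩ := IsTopologicalAddGroup.exists_antitone_basis_nhds_zero X
  set u : ℕ → Set X := fun n => u₀ n ∩ (-u₀ n) with hudef
  have humem : ∀ n, u n ∈ 𝓝 (0 : X) := fun n =>
    Filter.inter_mem (hu₀.mem n) (by simpa using neg_mem_nhds_zero X (hu₀.mem n))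
  have husub : ∀ n, u n ⊆ u₀ n := fun n => inter_subset_left
  have hu : (𝓝 (0 : X)).HasAntitoneBasis u := by
    constructor
    · refine (Filter.hasBasis_iff).2 fun t => ⟨fun ht => ?_, ?_⟩
      · rcases hu₀.mem_iff.mp ht with ⟨i, hi⟩
        exact ⟨i, trivial, (husub i).trans hi⟩
      · rintro ⟨i, -, hi⟩
        exact Filter.mem_of_superset (humem i) hi
    · intro a b hab
      exact inter_subset_inter (hu₀.antitone hab) (neg_subset_neg.2 (hu₀.antitone hab))
  have husymm : ∀ n, ∀ x ∈ u n, -x ∈ u n := by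
    intro n x hx
    exact ⟨hx.2, by simpa using hx.1⟩
  have huadd : ∀ n, ∀ a ∈ u (n + 1), ∀ b ∈ u (n + 1), a + b ∈ u n := by
    intro n a ha b hb
    refine ⟨hu₀add n (add_mem_add ha.1 hb.1), ?_⟩
    have : -b + -a ∈ u₀ n := hu₀add n (add_mem_add (husymm _ _ hb).1 (husymm _ _ ha).1)
    simpa [neg_add_rev] using this
  -- m such that u m ⊆ W
  obtain ⟨m, -, hm⟩ := hu.toHasBasis.mem_iff.mp hWmem
  -- the key inclusion
  have hkey : closure (T '' u (m + 1)) ⊆ T '' U := by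
    intro y hy
    set C : ℕ → Set Y := fun n => closure (T '' u n) with hCdef
    have hC : ∀ n, C n ∈ 𝓝 (0 : Y) := fun n => frechet_omt_step1 T hsurj (humem n)
    obtain ⟨v, hv⟩ := (𝓝 (0 : Y)).exists_antitone_basis
    -- recursive construction of partial sums
    have key : ∀ n : ℕ, ∀ s : X, y - T s ∈ C (m + 1 + n) →
        ∃ s' : X, (s' - s ∈ u (m + 1 + n)) ∧
          (y - T s' ∈ C (m + 1 + (n + 1)) ∧ y - T s' ∈ v n) := by
      intro n s hs
      have hD : C (m + 1 + (n + 1)) ∩ v n ∈ 𝓝 (0 : Y) :=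
        Filter.inter_mem (hC _) (hv.mem n)
      have hNmem : (fun z : Y => (y - T s) - z) ⁻¹' (C (m + 1 + (n + 1)) ∩ v n)
          ∈ 𝓝 (y - T s) := by
        have hc : ContinuousAt (fun z : Y => (y - T s) - z) (y - T s) :=
          (continuous_const.sub continuous_id).continuousAt
        refine hc.preimage_mem_nhds ?_
        rwa [sub_self]
      rcases mem_closure_iff_nhds.mp hs _ hNmem with ⟨z, hzN, w, hw, rfl⟩
      refine ⟨s + w, by simpa using hw, ?_, ?_⟩
      · have := hzN.1; simpa [map_add, sub_sub] using this
      · have := hzN.2; simpa [map_add, sub_sub] using this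
    set Fs : (n : ℕ) → {s : X // y - T s ∈ C (m + 1 + n)} := fun n =>
      Nat.recOn n ⟨0, by simpa using hy⟩ fun k ih =>
        ⟨Classical.choose (key k ih.1 ih.2),
          (Classical.choose_spec (key k ih.1 ih.2)).2.1⟩ with hFs
    set s : ℕ → X := fun n => (Fs n).1 with hsdef
    have hdiff : ∀ n, s (n + 1) - s n ∈ u (m + 1 + n) := fun n =>
      (Classical.choose_spec (key n (Fs n).1 (Fs n).2)).1
    have hvn : ∀ n, y - T (s (n + 1)) ∈ v n := fun n =>
      (Classical.choose_spec (key n (Fs n).1 (Fs n).2)).2.2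
    have hs0 : s 0 = 0 := rfl
    -- telescoping sums stay small
    have hsum : ∀ k n : ℕ, s (n + k) - s n ∈ u (m + n) := by
      intro k
      induction k with
      | zero =>
        intro n
        simpa using mem_of_mem_nhds (humem (m + n))
      | succ k ih =>
        intro n
        have h1 : s (n + 1 + k) - s (n + 1) ∈ u (m + (n + 1)) := ih (n + 1)
        have h2 : s (n + 1) - s n ∈ u (m + 1 + n) := hdiff n
        have h2' : s (n + 1) - s n ∈ u (m + n + 1) := by
          rwa [show m + 1 + n = m + n + 1 by omega] at h2
        have h1' : s (n + (k + 1)) - s (n + 1) ∈ u (m + n + 1) := by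
          rwa [show n + 1 + k = n + (k + 1) by omega, show m + (n + 1) = m + n + 1 by omega]
            at h1
        have := huadd (m + n) _ h1' _ h2'
        simpa [sub_add_sub_cancel] using this
    -- Cauchy
    have h𝓤 : (𝓤 X).HasBasis (fun _ : ℕ => True) fun i => {p : X × X | p.2 - p.1 ∈ u i} := by
      rw [uniformity_eq_comap_nhds_zero X]
      exact hu.toHasBasis.comap _
    have hcauchy : CauchySeq s := by
      rw [h𝓤.cauchySeq_iff']
      rintro i -
      refine ⟨i, fun n hn => ?_⟩
      have h1 : s n - s i ∈ u (m + i) := by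
        have := hsum (n - i) i
        rwa [show i + (n - i) = n by omega] at this
      have h2 : s i - s n ∈ u (m + i) := by
        have := husymm _ _ h1
        simpa using this
      exact hu.antitone (by omega : i ≤ m + i) h2
    obtain ⟨x, hx⟩ := cauchySeq_tendsto_of_complete hcauchy
    -- x ∈ U
    have hxW : x ∈ W := by
      have hmem : ∀ n, s n ∈ u m := by
        intro n
        have := hsum n 0
        simpa [hs0] using this
      have : x ∈ closure (u m) :=
        mem_closure_of_tendsto hx (Filter.Eventually.of_forall hmem)
      exact hWclosed.closure_subset_iff.mpr hm this
    -- T x = y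
    have hTx : T x = y := by
      have h1 : Tendsto (fun n => T (s n)) atTop (𝓝 (T x)) :=
        (T.continuous.tendsto x).comp hx
      have h1' : Tendsto (fun n => T (s (n + 1))) atTop (𝓝 (T x)) :=
        h1.comp (tendsto_add_atTop_nat 1)
      have h2 : Tendsto (fun n => y - T (s (n + 1))) atTop (𝓝 0) :=
        hv.tendsto hvn
      have h3 : Tendsto (fun n => T (s (n + 1))) atTop (𝓝 y) := by
        have := h2.const_sub y
        simpa using this
      exact tendsto_nhds_unique h1' h3
    exact ⟨x, hWU hxW, hTx⟩
  exact Filter.mem_of_superset (frechet_omt_step1 T hsurj (humem (m+1))) hkey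

set_option linter.unusedSectionVars false in
/-- **Open mapping theorem** for Fréchet spaces. -/
theorem frechet_omt (T : X →L[ℝ] Y) (hsurj : Function.Surjective T) : IsOpenMap T := by
  intro U hUopen
  rw [isOpen_iff_mem_nhds]
  rintro _ ⟨x, hx, rfl⟩
  have hU' : (fun z : X => z + x) ⁻¹' U ∈ 𝓝 (0 : X) := by
    refine (continuous_add_right x).continuousAt.preimage_mem_nhds ?_
    simpa using hUopen.mem_nhds hx
  have h0 : T '' ((fun z : X => z + x) ⁻¹' U) ∈ 𝓝 (0 : Y) := frechet_omt_step2 T hsurj hU'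
  have himg := (Homeomorph.addRight (T x)).isOpenMap.image_mem_nhds h0
  simp only [Homeomorph.coe_addRight, zero_add] at himg
  refine Filter.mem_of_superset himg ?_
  rintro _ ⟨_, ⟨w, hw, rfl⟩, rfl⟩
  exact ⟨w + x, hw, by simp [map_add]⟩

set_option linter.unusedSectionVars false in
/-- If `T` has closed range, the image of a closed subspace containing the kernel is closed. -/
theorem image_closed_of_ker_le (T : X →L[ℝ] Y) (hrange : IsClosed (Set.range T))
    (W : Submodule ℝ X) (hWclosed : IsClosed (W : Set X))
    (hker : LinearMap.ker (T : X →ₗ[ℝ] Y) ≤ W) : IsClosed (T '' (W : Set X)) := by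
  set Y' : Submodule ℝ Y := LinearMap.range (T : X →ₗ[ℝ] Y) with hY'
  have hY'closed : IsClosed (Y' : Set Y) := by
    simpa [hY', LinearMap.coe_range] using hrange
  haveI : IsUniformAddGroup Y' := Y'.toAddSubgroup.isUniformAddGroup
  haveI : CompleteSpace Y' := hY'closed.completeSpace_coe
  haveI : FirstCountableTopology Y' := TopologicalSpace.Subtype.firstCountableTopology (Y' : Set Y)
  set T' : X →L[ℝ] Y' := T.codRestrict Y' (fun x => LinearMap.mem_range_self _ x) with hT'
  have hsurj' : Function.Surjective T' := by
    rintro ⟨y, hy⟩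
    obtain ⟨x, hx⟩ := hy
    exact ⟨x, Subtype.ext hx⟩
  have hopen : IsOpen (T' '' ((W : Set X)ᶜ)) :=
    frechet_omt T' hsurj' _ hWclosed.isOpen_compl
  have heq : T' '' (W : Set X) = (T' '' ((W : Set X)ᶜ))ᶜ := by
    ext y
    constructor
    · rintro ⟨a, ha, rfl⟩ ⟨b, hb, hab⟩
      apply hb
      have hTab : T b = T a := congrArg Subtype.val hab
      have : b - a ∈ LinearMap.ker (T : X →ₗ[ℝ] Y) := by
        simp [LinearMap.mem_ker, map_sub, hTab]
      have hba : b - a ∈ W := hker this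
      have := W.add_mem hba ha
      simpa using this
    · intro hy
      obtain ⟨x, rfl⟩ := hsurj' y
      rcases em (x ∈ W) with hxW | hxW
      · exact ⟨x, hxW, rfl⟩
      · exact absurd ⟨x, hxW, rfl⟩ hy
  have hclosed' : IsClosed (T' '' (W : Set X)) := by
    rw [heq]
    exact hopen.isClosed_compl
  have himg : T '' (W : Set X) = Subtype.val '' (T' '' (W : Set X)) := by
    rw [Set.image_image]
    rfl
  rw [himg]
  exact (hY'closed.isClosedEmbedding_subtypeVal).isClosedMap _ hclosed'

end OMT

/-- For a continuous linear map `T` between Fréchet spaces,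
`T` maps every closed finite-codimensional subspace to a closed set iff the
range of `T` is closed. -/
theorem closed_under_finite_codim_iff_closed_range
    {X Y : Type*}
    [AddCommGroup X] [Module ℝ X] [UniformSpace X] [IsUniformAddGroup X]
    [ContinuousSMul ℝ X] [LocallyConvexSpace ℝ X] [T2Space X] [CompleteSpace X]
    [FirstCountableTopology X]
    [AddCommGroup Y] [Module ℝ Y] [UniformSpace Y] [IsUniformAddGroup Y]
    [ContinuousSMul ℝ Y] [LocallyConvexSpace ℝ Y] [T2Space Y] [CompleteSpace Y]
    [FirstCountableTopology Y]
    (T : X →L[ℝ] Y) :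
    (∀ X₀ : Submodule ℝ X, IsClosed (X₀ : Set X) →
        FiniteDimensional ℝ (X ⧸ X₀) → IsClosed (T '' (X₀ : Set X)))
      ↔ IsClosed (Set.range T) := by
  constructor
  · intro h
    haveI : Subsingleton (X ⧸ (⊤ : Submodule ℝ X)) :=
      Submodule.Quotient.subsingleton_iff.mpr rfl
    have h1 := h ⊤ (by simp) inferInstance
    simpa [Set.image_univ] using h1
  · intro hrange X₀ hX₀closed hfd
    set W : Submodule ℝ X := X₀ ⊔ LinearMap.ker (T : X →ₗ[ℝ] Y) with hWdef
    have himage : T '' (X₀ : Set X) = T '' (W : Set X) := by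
      apply Set.Subset.antisymm
      · exact Set.image_mono (show (X₀ : Set X) ⊆ W from fun x hx => le_sup_left (α := Submodule ℝ X) hx)
      · rintro _ ⟨w, hw, rfl⟩
        rcases Submodule.mem_sup.mp hw with ⟨a, ha, b, hb, rfl⟩
        refine ⟨a, ha, ?_⟩
        have hb0 : T b = 0 := LinearMap.mem_ker.mp hb
        simp [map_add, hb0]
    haveI : IsClosed (X₀ : Set X) := hX₀closed
    haveI : FiniteDimensional ℝ (X ⧸ X₀) := hfd
    set V : Submodule ℝ (X ⧸ X₀) := Submodule.map X₀.mkQ W with hVdef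
    haveI : Module.Finite ℝ V := FiniteDimensional.finiteDimensional_submodule V
    have hVclosed : IsClosed (V : Set (X ⧸ X₀)) := Submodule.closed_of_finiteDimensional V
    have hcomap : Submodule.comap X₀.mkQ V = W := by
      rw [hVdef, Submodule.comap_map_eq, Submodule.ker_mkQ]
      exact sup_eq_left.mpr (le_sup_left : X₀ ≤ W)
    have hWcoe : (W : Set X) = X₀.mkQ ⁻¹' (V : Set (X ⧸ X₀)) := by
      rw [← hcomap]
      rfl
    have hmkQcont : Continuous X₀.mkQ := continuous_quot_mk
    have hWclosed : IsClosed (W : Set X) := by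
      rw [hWcoe]
      exact hVclosed.preimage hmkQcont
    rw [himage]
    exact image_closed_of_ker_le T hrange W hWclosed le_sup_right
end

section
/- Let X and Y be locally convex Hausdorff topological vector spaces and F₁, F₂ : X ⇒ Y polyhedral convex multifunctions. Then the sum F₁ + F₂, defined by (F₁+F₂)(x) = F₁(x) + F₂(x) = {y₁ + y₂ : y₁ ∈ F₁(x), y₂ ∈ F₂(x)}, is a polyhedral convex multifunction. -/
section Helpers

variable {E : Type*} [AddCommGroup E] [Module ℝ E] [TopologicalSpace E]

lemma isPoly_fintype {ι : Type*} [Fintype ι] (f : ι → E →L[ℝ] ℝ) (α : ι → ℝ) :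
    IsPolyhedralConvex {x : E | ∀ i, f i x ≤ α i} := by
  refine ⟨Fintype.card ι, f ∘ (Fintype.equivFin ι).symm, α ∘ (Fintype.equivFin ι).symm, ?_⟩
  ext x
  constructor
  · intro h i; exact h _
  · intro h i; simpa using h (Fintype.equivFin ι i)

lemma isPoly_preimage {E F : Type*} [AddCommGroup E] [Module ℝ E] [TopologicalSpace E]
    [AddCommGroup F] [Module ℝ F] [TopologicalSpace F]
    (L : E →L[ℝ] F) {D : Set F} (hD : IsPolyhedralConvex D) :
    IsPolyhedralConvex (L ⁻¹' D) := by
  obtain ⟨n, f, α, rfl⟩ := hD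
  exact ⟨n, fun i => (f i).comp L, α, rfl⟩

lemma isPoly_proj_line (S : Set (E × ℝ)) (hS : IsPolyhedralConvex S) :
    IsPolyhedralConvex {e : E | ∃ t : ℝ, (e, t) ∈ S} := by
  classical
  obtain ⟨n, f, α, rfl⟩ := hS
  set g : Fin n → E →L[ℝ] ℝ := fun i => (f i).comp (ContinuousLinearMap.inl ℝ E ℝ) with hg
  set c : Fin n → ℝ := fun i => f i (0, 1) with hc
  have hft : ∀ (i : Fin n) (e : E) (t : ℝ), f i (e, t) = g i e + t * c i := by
    intro i e t
    have h1 : ((e, t) : E × ℝ) = (e, (0:ℝ)) + t • ((0:E), (1:ℝ)) := by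
      simp [Prod.ext_iff]
    rw [h1, map_add, map_smul]
    simp [hg, hc, smul_eq_mul]
  set ι' := {i : Fin n // c i = 0} ⊕ ({i : Fin n // 0 < c i} × {j : Fin n // c j < 0}) with hι'
  set F : ι' → E →L[ℝ] ℝ := fun k =>
    Sum.elim (fun i => g i.1) (fun p => c p.1.1 • g p.2.1 - c p.2.1 • g p.1.1) k with hF
  set γ : ι' → ℝ := fun k =>
    Sum.elim (fun i => α i.1) (fun p => c p.1.1 * α p.2.1 - c p.2.1 * α p.1.1) k with hγ
  have key : {e : E | ∃ t : ℝ, (e, t) ∈ {x : E × ℝ | ∀ i, f i x ≤ α i}} =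
      {x : E | ∀ k, F k x ≤ γ k} := by
    ext e
    simp only [Set.mem_setOf_eq]
    constructor
    · rintro ⟨t, ht⟩ k
      rcases k with ⟨i, hi⟩ | ⟨⟨i, hi⟩, ⟨j, hj⟩⟩
      · have := ht i
        rw [hft] at this
        simp only [hF, hγ, Sum.elim_inl]
        rw [hi] at this; linarith
      · have h1 := ht i; have h2 := ht j
        rw [hft] at h1 h2
        simp only [hF, hγ, Sum.elim_inr, ContinuousLinearMap.sub_apply,
          ContinuousLinearMap.smul_apply, smul_eq_mul]
        nlinarith [mul_nonneg hi.le (by linarith : (0:ℝ) ≤ α j - g j e - t * c j),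
          mul_nonneg (by linarith : (0:ℝ) ≤ -c j) (by linarith : (0:ℝ) ≤ α i - g i e - t * c i)]
    · intro hk
      -- lower/upper bounds
      set N : Finset (Fin n) := Finset.univ.filter (fun j => c j < 0) with hN
      set P : Finset (Fin n) := Finset.univ.filter (fun i => 0 < c i) with hP
      have hzero : ∀ i : Fin n, c i = 0 → g i e ≤ α i := fun i hi => hk (Sum.inl ⟨i, hi⟩)
      have hpair : ∀ (i j : Fin n), 0 < c i → c j < 0 →
          (α j - g j e) / c j ≤ (α i - g i e) / c i := by
        intro i j hi hj
        have h := hk (Sum.inr (⟨i, hi⟩, ⟨j, hj⟩))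
        simp only [hF, hγ, Sum.elim_inr, ContinuousLinearMap.sub_apply,
          ContinuousLinearMap.smul_apply, smul_eq_mul] at h
        rw [show (α j - g j e) / c j = -(α j - g j e) / (-c j) by rw [neg_div_neg_eq],
          div_le_div_iff₀ (by linarith) hi]
        nlinarith
      have hub : ∀ (t : ℝ) (i : Fin n), 0 < c i → t ≤ (α i - g i e) / c i →
          g i e + t * c i ≤ α i := by
        intro t i hi hle
        have := mul_le_mul_of_nonneg_right hle hi.le
        rw [div_mul_cancel₀ _ (ne_of_gt hi)] at this
        linarith
      have hlb : ∀ (t : ℝ) (j : Fin n), c j < 0 → (α j - g j e) / c j ≤ t →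
          g j e + t * c j ≤ α j := by
        intro t j hj hle
        have := mul_le_mul_of_nonpos_right hle (le_of_lt hj)
        rw [div_mul_cancel₀ _ (ne_of_lt hj)] at this
        linarith
      by_cases hNne : N.Nonempty
      · refine ⟨N.sup' hNne (fun j => (α j - g j e) / c j), fun i => ?_⟩
        rw [hft]
        rcases lt_trichotomy (c i) 0 with h | h | h
        · exact hlb _ i h (Finset.le_sup' (fun j => (α j - g j e) / c j) (show i ∈ N from Finset.mem_filter.mpr ⟨Finset.mem_univ i, h⟩))
        · rw [h]; simpa using hzero i h
        · refine hub _ i h (Finset.sup'_le _ _ fun j hjN => ?_)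
          exact hpair i j h (Finset.mem_filter.mp hjN).2
      · by_cases hPne : P.Nonempty
        · refine ⟨P.inf' hPne (fun i => (α i - g i e) / c i), fun i => ?_⟩
          rw [hft]
          rcases lt_trichotomy (c i) 0 with h | h | h
          · exact absurd ⟨i, show i ∈ N from Finset.mem_filter.mpr ⟨Finset.mem_univ i, h⟩⟩ hNne
          · rw [h]; simpa using hzero i h
          · exact hub _ i h (Finset.inf'_le (fun i => (α i - g i e) / c i) (show i ∈ P from Finset.mem_filter.mpr ⟨Finset.mem_univ i, h⟩))
        · refine ⟨0, fun i => ?_⟩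
          rw [hft]
          rcases lt_trichotomy (c i) 0 with h | h | h
          · exact absurd ⟨i, show i ∈ N from Finset.mem_filter.mpr ⟨Finset.mem_univ i, h⟩⟩ hNne
          · rw [h]; simpa using hzero i h
          · exact absurd ⟨i, show i ∈ P from Finset.mem_filter.mpr ⟨Finset.mem_univ i, h⟩⟩ hPne
  rw [key]
  exact isPoly_fintype F γ

lemma isPoly_proj_fin (m : ℕ) {E : Type*} [AddCommGroup E] [Module ℝ E] [TopologicalSpace E]
    (S : Set (E × (Fin m → ℝ))) (hS : IsPolyhedralConvex S) :
    IsPolyhedralConvex {e : E | ∃ v : Fin m → ℝ, (e, v) ∈ S} := by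
  induction m generalizing E with
  | zero =>
    obtain ⟨n, f, α, rfl⟩ := hS
    have h0 : {e : E | ∃ v : Fin 0 → ℝ, (e, v) ∈ {x : E × (Fin 0 → ℝ) | ∀ i, f i x ≤ α i}} =
        ((ContinuousLinearMap.id ℝ E).prod 0) ⁻¹' {x : E × (Fin 0 → ℝ) | ∀ i, f i x ≤ α i} := by
      ext e
      simp only [Set.mem_setOf_eq, Set.mem_preimage, ContinuousLinearMap.prod_apply,
        ContinuousLinearMap.coe_id', id_eq, ContinuousLinearMap.zero_apply]
      constructor
      · rintro ⟨v, hv⟩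
        rwa [Subsingleton.elim (0 : Fin 0 → ℝ) v]
      · intro h; exact ⟨0, h⟩
    rw [h0]
    exact isPoly_preimage _ ⟨n, f, α, rfl⟩
  | succ m ih =>
    -- ψ : (E × (Fin m → ℝ)) × ℝ →L[ℝ] E × (Fin (m+1) → ℝ), ψ ((e,w),t) = (e, Fin.cons t w)
    set ψ : ((E × (Fin m → ℝ)) × ℝ) →L[ℝ] E × (Fin (m+1) → ℝ) :=
      ((ContinuousLinearMap.fst ℝ E (Fin m → ℝ)).comp
        (ContinuousLinearMap.fst ℝ (E × (Fin m → ℝ)) ℝ)).prod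
      (ContinuousLinearMap.pi (fun i : Fin (m+1) =>
        Fin.cases (ContinuousLinearMap.snd ℝ (E × (Fin m → ℝ)) ℝ)
          (fun j => (ContinuousLinearMap.proj j).comp
            ((ContinuousLinearMap.snd ℝ E (Fin m → ℝ)).comp
              (ContinuousLinearMap.fst ℝ (E × (Fin m → ℝ)) ℝ))) i)) with hψ
    have hψapp : ∀ (e : E) (w : Fin m → ℝ) (t : ℝ), ψ ((e, w), t) = (e, Fin.cons t w) := by
      intro e w t
      refine Prod.ext ?_ ?_
      · simp [hψ]
      · funext i
        induction i using Fin.cases with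
        | zero => simp [hψ]
        | succ j => simp [hψ]
    have h1 : IsPolyhedralConvex (ψ ⁻¹' S) := isPoly_preimage ψ hS
    have h2 := isPoly_proj_line (ψ ⁻¹' S) h1
    have h4 := ih _ h2
    have heq : {e : E | ∃ v : Fin (m+1) → ℝ, (e, v) ∈ S} =
        {e : E | ∃ w : Fin m → ℝ, (e, w) ∈
          {q : E × (Fin m → ℝ) | ∃ t : ℝ, (q, t) ∈ ψ ⁻¹' S}} := by
      ext e
      simp only [Set.mem_setOf_eq, Set.mem_preimage]
      constructor
      · rintro ⟨v, hv⟩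
        refine ⟨Fin.tail v, v 0, ?_⟩
        rw [hψapp, Fin.cons_self_tail]
        exact hv
      · rintro ⟨w, t, hw⟩
        rw [hψapp] at hw
        exact ⟨Fin.cons t w, hw⟩
    rw [heq]
    exact h4

lemma isPoly_proj_pi {ι : Type*} [Fintype ι] {E : Type*} [AddCommGroup E] [Module ℝ E]
    [TopologicalSpace E] (S : Set (E × (ι → ℝ))) (hS : IsPolyhedralConvex S) :
    IsPolyhedralConvex {e : E | ∃ v : ι → ℝ, (e, v) ∈ S} := by
  set n := Fintype.card ι with hn
  set eqv := Fintype.equivFin ι with heqv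
  set ρ : (E × (Fin n → ℝ)) →L[ℝ] E × (ι → ℝ) :=
    (ContinuousLinearMap.fst ℝ E (Fin n → ℝ)).prod
      (ContinuousLinearMap.pi (fun i : ι =>
        (ContinuousLinearMap.proj (eqv i)).comp
          (ContinuousLinearMap.snd ℝ E (Fin n → ℝ)))) with hρ
  have hρapp : ∀ (e : E) (w : Fin n → ℝ), ρ (e, w) = (e, fun i => w (eqv i)) := by
    intro e w; refine Prod.ext ?_ ?_ <;> simp [hρ]
  have heq : {e : E | ∃ v : ι → ℝ, (e, v) ∈ S} =
      {e : E | ∃ w : Fin n → ℝ, (e, w) ∈ ρ ⁻¹' S} := by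
    ext e
    simp only [Set.mem_setOf_eq, Set.mem_preimage]
    constructor
    · rintro ⟨v, hv⟩
      refine ⟨fun k => v (eqv.symm k), ?_⟩
      rw [hρapp]
      simpa using hv
    · rintro ⟨w, hw⟩
      rw [hρapp] at hw
      exact ⟨_, hw⟩
  rw [heq]
  exact isPoly_proj_fin n _ (isPoly_preimage ρ hS)

end Helpers

/-- The sum of two polyhedral convex multifunctions is a
polyhedral convex multifunction. -/
theorem sum_of_polyhedral_multifunctions
    {X Y : Type*}
    [AddCommGroup X] [Module ℝ X] [TopologicalSpace X] [IsTopologicalAddGroup X]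
    [ContinuousSMul ℝ X] [LocallyConvexSpace ℝ X] [T2Space X]
    [AddCommGroup Y] [Module ℝ Y] [TopologicalSpace Y] [IsTopologicalAddGroup Y]
    [ContinuousSMul ℝ Y] [LocallyConvexSpace ℝ Y] [T2Space Y]
    (G₁ G₂ : Set (X × Y)) (hG₁ : IsPolyhedralConvex G₁) (hG₂ : IsPolyhedralConvex G₂) :
    IsPolyhedralConvex {p : X × Y |
      ∃ y₁ y₂ : Y, (p.1, y₁) ∈ G₁ ∧ (p.1, y₂) ∈ G₂ ∧ p.2 = y₁ + y₂} := by
  classical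
  obtain ⟨n₁, f₁, α, rfl⟩ := hG₁
  obtain ⟨n₂, f₂, β, rfl⟩ := hG₂
  set ι := (Fin n₁ ⊕ Fin n₂) with hι
  -- the linear map recording the values of all relevant functionals on Y
  set φ : Y →ₗ[ℝ] (ι → ℝ) := LinearMap.pi (Sum.elim
      (fun i => (f₁ i).toLinearMap ∘ₗ LinearMap.inr ℝ X Y)
      (fun j => (f₂ j).toLinearMap ∘ₗ LinearMap.inr ℝ X Y)) with hφ
  have hφ1 : ∀ (y : Y) (i : Fin n₁), φ y (Sum.inl i) = f₁ i (0, y) := by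
    intro y i; simp [hφ]
  have hφ2 : ∀ (y : Y) (j : Fin n₂), φ y (Sum.inr j) = f₂ j (0, y) := by
    intro y j; simp [hφ]
  set L := LinearMap.range φ with hL
  obtain ⟨L', hcompl⟩ := Submodule.exists_isCompl L
  set qf : (ι → ℝ) →ₗ[ℝ] (ι → ℝ) :=
    L'.subtype ∘ₗ Submodule.linearProjOfIsCompl L' L hcompl.symm with hqf
  have hker : ∀ v : ι → ℝ, qf v = 0 ↔ v ∈ L := by
    intro v
    rw [hqf]
    simp only [LinearMap.comp_apply]
    constructor
    · intro h
      have h2 : Submodule.linearProjOfIsCompl L' L hcompl.symm v = 0 := by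
        exact_mod_cast Subtype.ext (by simpa using h)
      have := LinearMap.mem_ker.mpr h2
      exact (Submodule.ker_projectionOnto hcompl.symm).le this
    · intro h
      have : Submodule.linearProjOfIsCompl L' L hcompl.symm v = 0 := by
        rw [← LinearMap.mem_ker]; exact (Submodule.ker_projectionOnto hcompl.symm).ge h
      simp [this]
  -- continuous linear functionals giving the equality constraints v ∈ L
  set hcoord : ι → ((X × Y) × (ι → ℝ)) →L[ℝ] ℝ := fun k =>
    (LinearMap.toContinuousLinearMap ((LinearMap.proj k) ∘ₗ qf)).comp
      (ContinuousLinearMap.snd ℝ (X × Y) (ι → ℝ)) with hhc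
  have hhcapp : ∀ (k : ι) (p : X × Y) (v : ι → ℝ), hcoord k (p, v) = qf v k := by
    intro k p v; simp [hhc]
  set Fst := ContinuousLinearMap.fst ℝ (X × Y) (ι → ℝ)
  set Snd := ContinuousLinearMap.snd ℝ (X × Y) (ι → ℝ)
  set F : (ι ⊕ ι ⊕ ι) → ((X × Y) × (ι → ℝ)) →L[ℝ] ℝ := fun k =>
    Sum.elim
      (Sum.elim
        (fun i => (f₁ i).comp ((ContinuousLinearMap.inl ℝ X Y).comp
            ((ContinuousLinearMap.fst ℝ X Y).comp Fst)) +
          (ContinuousLinearMap.proj (Sum.inl i : ι)).comp Snd)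
        (fun j => (f₂ j).comp Fst - (ContinuousLinearMap.proj (Sum.inr j : ι)).comp Snd))
      (Sum.elim (fun k => hcoord k) (fun k => -hcoord k)) k with hFdef
  set γ : (ι ⊕ ι ⊕ ι) → ℝ := fun k =>
    Sum.elim (Sum.elim (fun i => α i) (fun j => β j)) (Sum.elim (fun _ => 0) (fun _ => 0)) k
    with hγdef
  have hFA : ∀ (i : Fin n₁) (p : X × Y) (v : ι → ℝ),
      F (Sum.inl (Sum.inl i)) (p, v) = f₁ i (p.1, 0) + v (Sum.inl i) := by
    intro i p v; simp [hFdef, Fst, Snd]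
  have hFB : ∀ (j : Fin n₂) (p : X × Y) (v : ι → ℝ),
      F (Sum.inl (Sum.inr j)) (p, v) = f₂ j p - v (Sum.inr j) := by
    intro j p v; simp [hFdef, Fst, Snd]
  have hsplit1 : ∀ (i : Fin n₁) (x : X) (y : Y), f₁ i (x, y) = f₁ i (x, 0) + f₁ i (0, y) := by
    intro i x y
    rw [← map_add]
    congr 1
    simp
  have hsplit2 : ∀ (j : Fin n₂) (x : X) (y y' : Y),
      f₂ j (x, y + y') = f₂ j (x, y) + f₂ j (0, y') := by
    intro j x y y'
    rw [← map_add]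
    congr 1
    simp
  have key : {p : X × Y |
      ∃ y₁ y₂ : Y, (p.1, y₁) ∈ {x : X × Y | ∀ i, f₁ i x ≤ α i} ∧
        (p.1, y₂) ∈ {x : X × Y | ∀ i, f₂ i x ≤ β i} ∧ p.2 = y₁ + y₂} =
      {p : X × Y | ∃ v : ι → ℝ, (p, v) ∈ {x | ∀ k, F k x ≤ γ k}} := by
    ext p
    simp only [Set.mem_setOf_eq]
    constructor
    · rintro ⟨y₁, y₂, h1, h2, h3⟩
      refine ⟨φ y₁, fun k => ?_⟩
      have hmem : qf (φ y₁) = 0 := (hker (φ y₁)).mpr ⟨y₁, rfl⟩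
      rcases k with (i | j) | (k | k)
      · rw [hFA]
        have := h1 i
        rw [hsplit1 i p.1 y₁] at this
        rw [hφ1]
        simpa [hγdef] using this
      · rw [hFB]
        have := h2 j
        have hy2 : f₂ j (p.1, p.2) = f₂ j (p.1, y₂) + f₂ j (0, y₁) := by
          rw [h3, show y₁ + y₂ = y₂ + y₁ from add_comm _ _, hsplit2]
        rw [hφ2]
        simp only [hγdef, Sum.elim_inl, Sum.elim_inr]
        have hp : f₂ j p = f₂ j (p.1, p.2) := by rw [Prod.mk.eta]
        rw [hp, hy2]
        linarith
      · simp only [hFdef, Sum.elim_inr, Sum.elim_inl, hγdef]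
        rw [hhcapp, hmem]
        simp
      · simp only [hFdef, Sum.elim_inr, hγdef]
        rw [ContinuousLinearMap.neg_apply, hhcapp, hmem]
        simp
    · rintro ⟨v, hv⟩
      have hq0 : qf v = 0 := by
        funext k
        have h1 := hv (Sum.inr (Sum.inl k))
        have h2 := hv (Sum.inr (Sum.inr k))
        simp only [hFdef, Sum.elim_inr, Sum.elim_inl, hγdef] at h1 h2
        rw [hhcapp] at h1
        rw [ContinuousLinearMap.neg_apply, hhcapp] at h2
        have : qf v k = 0 := le_antisymm h1 (by linarith)
        simpa using this
      obtain ⟨y₁, hy₁⟩ := (hker v).mp hq0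
      refine ⟨y₁, p.2 - y₁, ?_, ?_, by abel⟩
      · intro i
        have := hv (Sum.inl (Sum.inl i))
        rw [hFA] at this
        rw [hsplit1 i p.1 y₁]
        rw [← hy₁, hφ1] at this
        simpa [hγdef] using this
      · intro j
        have := hv (Sum.inl (Sum.inr j))
        rw [hFB] at this
        rw [← hy₁, hφ2] at this
        have hsp : f₂ j (p.1, p.2) = f₂ j (p.1, p.2 - y₁) + f₂ j (0, y₁) := by
          rw [← hsplit2, sub_add_cancel]
        have hp : f₂ j p = f₂ j (p.1, p.2) := by rw [Prod.mk.eta]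
        rw [hp, hsp] at this
        simpa [hγdef] using this
  rw [key]
  exact isPoly_proj_pi _ (isPoly_fintype F γ)
end
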